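/- arXiv:2003.12802 — 10 statements merged into one kernel-verified Lean document; each statement's English description precedes it below -/
import Mathlib

section
/- Let G be a finite group in which every element g satisfies g^3 = 1. Then the commutator subgroup ⁅G,G⁆ of G is commutative (hence, since all its elements also satisfy x^3 = 1, it is an elementary abelian 3-group). -/
namespace Exp3

open scoped commutatorElement

variable {G : Type*} [Group G]


section
variable (h3 : ∀ g : G, g ^ 3 = 1)
include h3

lemma cube (g : G) : g * g * g = 1 := by
  have := h3 g; rwa [pow_succ, pow_succ, pow_one] at this

lemma inv_mul_inv (g : G) : g⁻¹ * g⁻¹ = g := by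
  have h := cube h3 g
  calc g⁻¹ * g⁻¹ = g⁻¹ * g⁻¹ * (g * g * g) := by rw [h]; group
  _ = g := by group

lemma lemA (y x : G) : (y * x * y⁻¹) * (y⁻¹ * x * y) * x = 1 := by
  calc (y * x * y⁻¹) * (y⁻¹ * x * y) * x = y * x * (y⁻¹ * y⁻¹) * x * y * x := by group
  _ = y * x * y * x * y * x := by rw [inv_mul_inv h3]
  _ = (y * x) ^ 3 := by rw [pow_succ, pow_succ, pow_one]; group
  _ = 1 := h3 _

lemma lemA' (y x : G) : (y * x * y⁻¹) * (y⁻¹ * x * y) = x⁻¹ :=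
  mul_eq_one_iff_eq_inv.mp (lemA h3 y x)

lemma commute_self_conj (z u : G) : Commute u (z * u * z⁻¹) := by
  have key : ∀ y x : G, (y * x * y⁻¹) * (y⁻¹ * x * y) = (y⁻¹ * x * y) * (y * x * y⁻¹) := by
    intro y x
    rw [lemA' h3 y x]
    have h2 := lemA' h3 y⁻¹ x
    rw [inv_inv] at h2
    exact h2.symm
  have hz : z * z * (z * z) = z := by
    have h := cube h3 z
    calc z * z * (z * z) = z * (z * z * z) := by group
    _ = z := by rw [h, mul_one]
  have h2 := key (z * z) (z * z * u * (z * z)⁻¹)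
  have e1 : (z * z)⁻¹ * (z * z * u * (z * z)⁻¹) * (z * z) = u := by group
  have e2 : z * z * (z * z * u * (z * z)⁻¹) * (z * z)⁻¹ = z * u * z⁻¹ := by
    calc z * z * (z * z * u * (z * z)⁻¹) * (z * z)⁻¹
        = (z * z * (z * z)) * u * (z * z * (z * z))⁻¹ := by group
    _ = z * u * z⁻¹ := by rw [hz]
  rw [e1, e2] at h2
  exact h2.symm

lemma commute_conj_conj (x g h : G) : Commute (g * x * g⁻¹) (h * x * h⁻¹) := by
  have base : Commute x ((g⁻¹ * h) * x * (g⁻¹ * h)⁻¹) := commute_self_conj h3 (g⁻¹ * h) x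
  have hmap := base.map (MulAut.conj g).toMonoidHom
  have e1 : (MulAut.conj g).toMonoidHom x = g * x * g⁻¹ := by simp [MulAut.conj_apply]
  have e2 : (MulAut.conj g).toMonoidHom ((g⁻¹ * h) * x * (g⁻¹ * h)⁻¹) = h * x * h⁻¹ := by
    simp only [MulEquiv.coe_toMonoidHom, MulAut.conj_apply]
    group
  rw [e1, e2] at hmap
  exact hmap



end

lemma closure_comm_of_comm {S : Set G} (hS : ∀ a ∈ S, ∀ b ∈ S, a * b = b * a) :
    ∀ a ∈ Subgroup.closure S, ∀ b ∈ Subgroup.closure S, a * b = b * a := by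
  have h1 : Subgroup.closure S ≤ Subgroup.centralizer S :=
    (Subgroup.closure_le _).2 fun s hs =>
      Subgroup.mem_centralizer_iff.mpr fun g hg => hS g hg s hs
  intro a ha b hb
  have hb' := h1 hb
  have h2 : Subgroup.closure S ≤ Subgroup.centralizer {b} :=
    (Subgroup.closure_le _).2 fun s hs =>
      Subgroup.mem_centralizer_iff.mpr (by
        rintro g rfl
        exact (Subgroup.mem_centralizer_iff.mp hb' s hs).symm)
  exact (Subgroup.mem_centralizer_iff.mp (h2 ha) b rfl).symm

section
variable (h3 : ∀ g : G, g ^ 3 = 1)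
include h3

lemma nc_comm (x : G) :
    ∀ a ∈ Subgroup.normalClosure ({x} : Set G), ∀ b ∈ Subgroup.normalClosure ({x} : Set G),
      a * b = b * a := by
  have hgen : ∀ a ∈ Group.conjugatesOfSet ({x} : Set G),
      ∀ b ∈ Group.conjugatesOfSet ({x} : Set G), a * b = b * a := by
    intro a ha b hb
    rw [Group.mem_conjugatesOfSet_iff] at ha hb
    obtain ⟨a0, ha0, hca⟩ := ha
    obtain ⟨b0, hb0, hcb⟩ := hb
    rw [Set.mem_singleton_iff] at ha0 hb0
    rw [ha0] at hca; rw [hb0] at hcb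
    rw [isConj_iff] at hca hcb
    obtain ⟨c1, rfl⟩ := hca
    obtain ⟨c2, rfl⟩ := hcb
    exact commute_conj_conj h3 x c1 c2
  exact closure_comm_of_comm hgen

end

lemma abstract_T {V : Type*} [AddCommGroup V] (τ : G → V →+ V)
    (hone : ∀ v : V, τ 1 v = v)
    (hcomp : ∀ g h : G, ∀ v : V, τ (g * h) v = τ g (τ h v))
    (hA : ∀ y : G, ∀ v : V, τ y v + τ y⁻¹ v + v = 0) (g h k : G) (v : V) :
    τ g (τ h (τ k v - v) - (τ k v - v)) - (τ h (τ k v - v) - (τ k v - v)) = 0 := by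
  have t3 : ∀ w : V, w + w + w = 0 := by
    intro w; have := hA 1 w; rwa [hone, inv_one, hone] at this
  have hinv : ∀ y : G, ∀ w : V, τ y⁻¹ w = -w - τ y w := by
    intro y w; linear_combination (norm := abel) hA y w
  have star : ∀ a b : G, ∀ w : V, τ a (τ b w) = -τ b (τ a w) - τ a w - τ b w - w - w := by
    intro a b w
    have e1 := hA (a * b) w
    rw [hcomp] at e1
    have e2 : τ (a * b)⁻¹ w = τ b⁻¹ (τ a⁻¹ w) := by rw [← hcomp, mul_inv_rev]
    rw [e2, hinv b, hinv a, map_sub, map_neg] at e1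
    linear_combination (norm := abel) e1
  -- diamond relation from (g*(h*k))
  have d1 := hA (g * (h * k)) v
  rw [hcomp, hcomp] at d1
  have d2 : τ (g * (h * k))⁻¹ v = τ k⁻¹ (τ h⁻¹ (τ g⁻¹ v)) := by
    have e : (g * (h * k))⁻¹ = k⁻¹ * (h⁻¹ * g⁻¹) := by group
    rw [e, hcomp, hcomp]
  rw [d2, hinv g, hinv h, hinv k] at d1
  simp only [map_sub, map_neg] at d1
  -- now d1 contains reversed words τ k (τ h (τ g v)), τ k (τ g v), τ k (τ h v), τ h (τ g v)
  rw [star k h (τ g v)] at d1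
  rw [star k g v] at d1
  simp only [map_sub, map_neg] at d1
  rw [star h g (τ k v)] at d1
  rw [star h g v] at d1
  rw [star k h v] at d1
  -- now derive: twice the goal expression is a sum of 3-torsion terms
  set E := τ g (τ h (τ k v - v) - (τ k v - v)) - (τ h (τ k v - v) - (τ k v - v)) with hE
  have hEexp : E = τ g (τ h (τ k v)) - τ g (τ h v) - τ g (τ k v) + τ g v
      - τ h (τ k v) + τ h v + τ k v - v := by
    rw [hE]; simp only [map_sub, map_neg]; abel
  have hEE : E + E = 0 := by
    rw [hEexp]
    linear_combination (norm := abel) d1 + t3 (-τ g (τ h v)) + t3 (-τ g (τ k v))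
      + t3 (-τ h (τ k v)) + t3 (τ h v) + t3 (-v) + t3 (-v)
  have hE3 : E + E + E = 0 := t3 E
  rw [hEE, zero_add] at hE3
  exact hE3



lemma key_comm (h3 : ∀ g : G, g ^ 3 = 1) (g h k x : G) : ⁅g, ⁅h, ⁅k, x⁆⁆⁆ = 1 := by
  set N := Subgroup.normalClosure ({x} : Set G) with hNdef
  have hcomm := nc_comm h3 x
  letI : CommGroup ↥N :=
    { (inferInstance : Group ↥N) with
      mul_comm := fun a b => Subtype.ext (hcomm ↑a a.2 ↑b b.2) }
  have hnormal : N.Normal := Subgroup.normalClosure_normal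
  let σ : G → ↥N → ↥N := fun a v => ⟨a * ↑v * a⁻¹, hnormal.conj_mem ↑v v.2 a⟩
  have hσmul : ∀ (a : G) (v w : ↥N), σ a (v * w) = σ a v * σ a w := by
    intro a v w
    apply Subtype.ext
    show a * (↑v * ↑w) * a⁻¹ = (a * ↑v * a⁻¹) * (a * ↑w * a⁻¹)
    group
  let τ : G → Additive ↥N →+ Additive ↥N := fun a =>
    AddMonoidHom.mk' (fun v => Additive.ofMul (σ a (Additive.toMul v))) (by
      intro v w
      show Additive.ofMul (σ a (Additive.toMul (v + w))) =
        Additive.ofMul (σ a (Additive.toMul v) * σ a (Additive.toMul w))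
      rw [toMul_add, hσmul])
  have hone : ∀ v : Additive ↥N, τ 1 v = v := by
    intro v
    show Additive.ofMul (σ 1 (Additive.toMul v)) = v
    have e : σ 1 (Additive.toMul v) = Additive.toMul v := by
      apply Subtype.ext
      show (1 : G) * (↑(Additive.toMul v) : G) * (1 : G)⁻¹ = (↑(Additive.toMul v) : G)
      group
    rw [e]; rfl
  have hcomp : ∀ a b : G, ∀ v : Additive ↥N, τ (a * b) v = τ a (τ b v) := by
    intro a b v
    show Additive.ofMul (σ (a * b) (Additive.toMul v)) =
      Additive.ofMul (σ a (Additive.toMul (Additive.ofMul (σ b (Additive.toMul v)))))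
    rw [toMul_ofMul]
    apply congrArg
    apply Subtype.ext
    show (a * b) * ↑(Additive.toMul v) * (a * b)⁻¹ = a * (b * ↑(Additive.toMul v) * b⁻¹) * a⁻¹
    group
  have hA : ∀ y : G, ∀ v : Additive ↥N, τ y v + τ y⁻¹ v + v = 0 := by
    intro y v
    show Additive.ofMul (σ y (Additive.toMul v)) + Additive.ofMul (σ y⁻¹ (Additive.toMul v)) + v = 0
    apply Additive.toMul.injective
    rw [toMul_add, toMul_add, toMul_zero, toMul_ofMul, toMul_ofMul]
    apply Subtype.ext
    show (y * ↑(Additive.toMul v) * y⁻¹) * (y⁻¹ * ↑(Additive.toMul v) * y⁻¹⁻¹) * ↑(Additive.toMul v) = 1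
    rw [inv_inv]
    exact lemA h3 y _
  have hx : x ∈ N := Subgroup.subset_normalClosure (Set.mem_singleton x)
  have E0 := abstract_T τ hone hcomp hA g h k (Additive.ofMul (⟨x, hx⟩ : ↥N))
  -- translation
  have conv : ∀ (a : G) (w : Additive ↥N),
      (↑(Additive.toMul (τ a w - w)) : G) = ⁅a, (↑(Additive.toMul w) : G)⁆ := by
    intro a w
    rw [toMul_sub, div_eq_mul_inv]
    show (↑(σ a (Additive.toMul w) * (Additive.toMul w)⁻¹) : G) = _
    rw [commutatorElement_def]
    push_cast
    show a * ↑(Additive.toMul w) * a⁻¹ * (↑(Additive.toMul w))⁻¹ = _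
    group
  set v0 : Additive ↥N := Additive.ofMul (⟨x, hx⟩ : ↥N) with hv0
  set D1 : Additive ↥N := τ k v0 - v0 with hD1
  set D2 : Additive ↥N := τ h D1 - D1 with hD2
  have c1 : (↑(Additive.toMul D1) : G) = ⁅k, x⁆ := by
    rw [hD1, conv k v0]; rfl
  have c2 : (↑(Additive.toMul D2) : G) = ⁅h, ⁅k, x⁆⁆ := by
    rw [hD2, conv h D1, c1]
  have c3 : (↑(Additive.toMul (τ g D2 - D2)) : G) = ⁅g, ⁅h, ⁅k, x⁆⁆⁆ := by
    rw [conv g D2, c2]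
  rw [E0] at c3
  rw [← c3, toMul_zero]
  rfl



lemma sc_scale {a z x y : G} (hz : z * a = a * z) (H : SemiconjBy a x y) :
    SemiconjBy a (z * x) (z * y) := by
  have H' : a * x = y * a := H
  show a * (z * x) = (z * y) * a
  calc a * (z * x) = (a * z) * x := by group
  _ = (z * a) * x := by rw [← hz]
  _ = z * (a * x) := by group
  _ = z * (y * a) := by rw [H']
  _ = (z * y) * a := by group

lemma central_inv {z : G} (h : ∀ s : G, z * s = s * z) (t : G) : z⁻¹ * t = t * z⁻¹ := by
  calc z⁻¹ * t = z⁻¹ * t * (z * z⁻¹) := by group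
  _ = z⁻¹ * (t * z) * z⁻¹ := by group
  _ = z⁻¹ * (z * t) * z⁻¹ := by rw [← h t]
  _ = t * z⁻¹ := by group

lemma comm_comm (h3 : ∀ g : G, g ^ 3 = 1) (c d a b : G) : ⁅⁅c, d⁆, ⁅a, b⁆⁆ = 1 := by
  set w := ⁅a, b⁆ with hw
  set z1 := ⁅c, w⁆ with hz1
  set z2 := ⁅d, w⁆ with hz2
  have hz1c : ∀ t : G, z1 * t = t * z1 := by
    intro t
    have e := key_comm h3 t c a b
    rw [← hw, ← hz1] at e
    exact (commutatorElement_eq_one_iff_commute.mp e).eq.symm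
  have hz2c : ∀ t : G, z2 * t = t * z2 := by
    intro t
    have e := key_comm h3 t d a b
    rw [← hw, ← hz2] at e
    exact (commutatorElement_eq_one_iff_commute.mp e).eq.symm
  have sc_c : SemiconjBy c w (z1 * w) := by
    show c * w = (z1 * w) * c
    rw [hz1, commutatorElement_def]; group
  have sc_d : SemiconjBy d w (z2 * w) := by
    show d * w = (z2 * w) * d
    rw [hz2, commutatorElement_def]; group
  have s1 : SemiconjBy d⁻¹ w (z2⁻¹ * w) := by
    have H := sc_scale (central_inv hz2c d⁻¹) sc_d.inv_symm_left
    rwa [inv_mul_cancel_left] at H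
  have s1c : SemiconjBy c⁻¹ w (z1⁻¹ * w) := by
    have H := sc_scale (central_inv hz1c c⁻¹) sc_c.inv_symm_left
    rwa [inv_mul_cancel_left] at H
  have s2 : SemiconjBy c⁻¹ (z2⁻¹ * w) (z2⁻¹ * (z1⁻¹ * w)) :=
    sc_scale (central_inv hz2c c⁻¹) s1c
  have s3 : SemiconjBy d (z2⁻¹ * (z1⁻¹ * w)) (z2⁻¹ * (z1⁻¹ * (z2 * w))) :=
    sc_scale (central_inv hz2c d) (sc_scale (central_inv hz1c d) sc_d)
  have s4 : SemiconjBy c (z2⁻¹ * (z1⁻¹ * (z2 * w))) (z2⁻¹ * (z1⁻¹ * (z2 * (z1 * w)))) :=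
    sc_scale (central_inv hz2c c) (sc_scale (central_inv hz1c c) (sc_scale (hz2c c) sc_c))
  have m1 := s2.mul_left s1
  have m2 := s3.mul_left m1
  have m3 := s4.mul_left m2
  have hy4 : z2⁻¹ * (z1⁻¹ * (z2 * (z1 * w))) = w := by
    calc z2⁻¹ * (z1⁻¹ * (z2 * (z1 * w))) = z2⁻¹ * (z1⁻¹ * ((z2 * z1) * w)) := by group
    _ = z2⁻¹ * (z1⁻¹ * ((z1 * z2) * w)) := by rw [hz2c z1]
    _ = w := by group
  rw [hy4] at m3
  have heq : ⁅c, d⁆ = c * (d * (c⁻¹ * d⁻¹)) := by rw [commutatorElement_def]; group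
  apply commutatorElement_eq_one_iff_commute.mpr
  show SemiconjBy ⁅c, d⁆ w w
  rw [heq]
  exact m3

end Exp3

/-- Let `G` be a finite group in which every element `g` satisfies `g ^ 3 = 1`. Then the
commutator subgroup `⁅G,G⁆` of `G` is commutative. -/
theorem exponent_three_commutator_commutative
    (G : Type*) [Group G] [Finite G] (h3 : ∀ g : G, g ^ 3 = 1) :
    ∀ x y : ↥(commutator G), x * y = y * x := by
  have hset : ∀ s ∈ commutatorSet G, ∀ t ∈ commutatorSet G, s * t = t * s := by
    rintro s ⟨c, d, rfl⟩ t ⟨a, b, rfl⟩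
    exact (commutatorElement_eq_one_iff_commute.mp (Exp3.comm_comm h3 c d a b)).eq
  have hcl : ∀ a ∈ Subgroup.closure (commutatorSet G), ∀ b ∈ Subgroup.closure (commutatorSet G),
      a * b = b * a := by
    have h1 : Subgroup.closure (commutatorSet G) ≤ Subgroup.centralizer (commutatorSet G) :=
      (Subgroup.closure_le _).2 fun s hs =>
        Subgroup.mem_centralizer_iff.mpr fun g hg => hset g hg s hs
    intro a ha b hb
    have hb' := h1 hb
    have h2 : Subgroup.closure (commutatorSet G) ≤ Subgroup.centralizer {b} :=
      (Subgroup.closure_le _).2 fun s hs =>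
        Subgroup.mem_centralizer_iff.mpr (by
          rintro g rfl
          exact (Subgroup.mem_centralizer_iff.mp hb' s hs).symm)
    exact (Subgroup.mem_centralizer_iff.mp (h2 ha) b rfl).symm
  intro x y
  have hx : (↑x : G) ∈ Subgroup.closure (commutatorSet G) := by
    rw [← commutator_eq_closure]; exact x.2
  have hy : (↑y : G) ∈ Subgroup.closure (commutatorSet G) := by
    rw [← commutator_eq_closure]; exact y.2
  exact Subtype.ext (hcl ↑x hx ↑y hy)
end

section
/- Let p be a prime, n ≥ 1, and let G be a commutative subgroup of GL_n(ZMod p). Regarding elements of G as n×n matrices over ZMod p, the following are equivalent: (1) for every g ∈ G, 1 + g + g^2 + ⋯ + g^{p−1} = 0; (2) for every g ∈ G, (g − 1)^{p−1} = 0; (3) for all g₁, …, g_{p−1} ∈ G, (g₁ − 1)(g₂ − 1)⋯(g_{p−1} − 1) = 0; (4) for every subset X ⊆ G whose generated subgroup is all of G, and all g₁, …, g_{p−1} ∈ X, (g₁ − 1)(g₂ − 1)⋯(g_{p−1} − 1) = 0. -/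
open Finset Pointwise
theorem geom_aux (p : ℕ) (hp : p.Prime) (R : Type*) [Ring R] [Algebra (ZMod p) R] (x : R) :
    ∑ i ∈ Finset.range p, x ^ i = (x - 1) ^ (p - 1) := by
  haveI := Fact.mk hp
  have hX : ((Polynomial.X : Polynomial (ZMod p)) - 1) ≠ 0 := by
    simpa using Polynomial.X_sub_C_ne_zero (1 : ZMod p)
  have hpoly : (∑ i ∈ Finset.range p, (Polynomial.X : Polynomial (ZMod p)) ^ i)
      = ((Polynomial.X : Polynomial (ZMod p)) - 1) ^ (p - 1) := by
    apply mul_right_cancel₀ hX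
    rw [geom_sum_mul, ← pow_succ, Nat.sub_add_cancel hp.one_le]
    have := sub_pow_char (p := p) (x := (Polynomial.X : Polynomial (ZMod p))) (y := 1)
    simp only [one_pow] at this
    rw [this]
  have := congrArg (Polynomial.aeval x) hpoly
  simpa using this

private lemma prod_mem_pow_card {A : Type*} [CommRing A] (J : Ideal A) {ι : Type*}
    [DecidableEq ι] (T : Finset ι) (v : ι → A) (hv : ∀ i ∈ T, v i ∈ J) :
    ∏ i ∈ T, v i ∈ J ^ T.card := by
  induction T using Finset.induction with
  | empty => simp [Ideal.one_eq_top]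
  | insert _ _ h ih =>
    rename_i a T'
    rw [Finset.prod_insert h, Finset.card_insert_of_notMem h, pow_succ']
    exact Ideal.mul_mem_mul (hv _ (Finset.mem_insert_self _ _))
      (ih fun i hi => hv i (Finset.mem_insert_of_mem hi))

private lemma prod_mem_pow_sum {A : Type*} [CommRing A] (J : Ideal A) {ι : Type*}
    [DecidableEq ι] (T : Finset ι) (x : ι → A) (k : ι → ℕ)
    (h : ∀ i ∈ T, x i ∈ J ^ k i) : ∏ i ∈ T, x i ∈ J ^ (∑ i ∈ T, k i) := by
  induction T using Finset.induction with
  | empty => simp [Ideal.one_eq_top]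
  | insert _ _ hm ih =>
    rename_i a T'
    rw [Finset.prod_insert hm, Finset.sum_insert hm, pow_add]
    exact Ideal.mul_mem_mul (h _ (Finset.mem_insert_self _ _))
      (ih fun i hi => h i (Finset.mem_insert_of_mem hi))

private lemma neg_one_pow_sub (a b : ℕ) (h : b ≤ a) : (-1 : ℤ)^(a - b) = (-1)^a * (-1)^b := by
  conv_rhs => rw [← Nat.sub_add_cancel h, pow_add, mul_assoc, ← pow_add, ← two_mul]
  simp [pow_mul]

private lemma moebius_aux {m : ℕ} (U : Finset (Fin m)) :
    ∑ S : Finset (Fin m), (if U ⊆ S then (-1 : ℤ)^(m - S.card) else 0)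
      = if U = Finset.univ then 1 else 0 := by
  classical
  rw [← Finset.sum_filter]
  have hbij : ∑ S ∈ Finset.univ.filter (fun S => U ⊆ S), (-1 : ℤ)^(m - S.card)
      = ∑ V ∈ (Finset.univ \ U).powerset, (-1 : ℤ)^((Finset.univ \ U).card - V.card) := by
    apply Finset.sum_nbij' (i := fun S => S \ U) (j := fun V => U ∪ V)
    · intro S hS
      simp only [Finset.mem_powerset]
      exact Finset.sdiff_subset_sdiff (Finset.subset_univ S) le_rfl
    · intro V hV
      simp only [Finset.mem_filter, Finset.mem_univ, true_and]
      exact Finset.subset_union_left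
    · intro S hS
      simp only [Finset.mem_filter, Finset.mem_univ, true_and] at hS
      exact Finset.union_sdiff_of_subset hS
    · intro V hV
      simp only [Finset.mem_powerset] at hV
      apply Finset.union_sdiff_cancel_left
      exact Finset.disjoint_left.mpr fun a haU haV => (Finset.mem_sdiff.mp (hV haV)).2 haU
    · intro S hS
      simp only [Finset.mem_filter, Finset.mem_univ, true_and] at hS
      congr 1
      have h1 : (S \ U).card = S.card - U.card := Finset.card_sdiff_of_subset hS
      have h2 : (Finset.univ \ U).card = m - U.card := by
        rw [Finset.card_sdiff_of_subset (Finset.subset_univ U), Finset.card_univ, Fintype.card_fin]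
      have hUS : U.card ≤ S.card := Finset.card_le_card hS
      have hSm : S.card ≤ m := by
        simpa [Finset.card_univ] using Finset.card_le_card (Finset.subset_univ S)
      omega
  rw [hbij]
  have : ∀ V ∈ (Finset.univ \ U).powerset, (-1 : ℤ)^((Finset.univ \ U).card - V.card)
      = (-1 : ℤ)^(Finset.univ \ U).card * (-1 : ℤ)^V.card := by
    intro V hV
    exact neg_one_pow_sub _ _ (Finset.card_le_card (Finset.mem_powerset.mp hV))
  rw [Finset.sum_congr rfl this, ← Finset.mul_sum, Finset.sum_powerset_neg_one_pow_card]
  have hiff : Finset.univ \ U = ∅ ↔ U = Finset.univ := by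
    constructor
    · intro h
      exact Finset.eq_univ_of_forall fun x => by
        by_contra hx
        exact Finset.notMem_empty x (h ▸ Finset.mem_sdiff.mpr ⟨Finset.mem_univ x, hx⟩)
    · intro h; simp [h]
  by_cases h : U = Finset.univ
  · simp [h, hiff.mpr h]
  · simp [h, fun hh => h (hiff.mp hh)]

private lemma key_identity {A : Type*} [CommRing A] (m : ℕ) (u : Fin m → A) :
    ∃ z ∈ Ideal.span (Set.range u) ^ (m + 1),
      ∑ S : Finset (Fin m), (-1 : ℤ)^(m - S.card) • ((∏ i ∈ S, (1 + u i)) - 1) ^ m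
        = Nat.factorial m • ∏ i, u i + z := by
  classical
  set w : Finset (Fin m) → A := fun T => ∏ i ∈ T, u i with hw
  set W : (Fin m → Finset (Fin m)) → A := fun f => ∏ j, w (f j) with hW
  set D : Finset (Fin m → Finset (Fin m)) :=
    Fintype.piFinset (fun _ => (Finset.univ.powerset.erase ∅)) with hD
  -- step 1
  have step1 : ∀ S : Finset (Fin m), ((∏ i ∈ S, (1 + u i)) - 1) ^ m
      = ∑ f ∈ Fintype.piFinset (fun _ : Fin m => S.powerset.erase ∅), W f := by
    intro S
    have h1 : ∏ i ∈ S, (1 + u i) = ∑ T ∈ S.powerset, w T := by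
      rw [Finset.prod_congr rfl (fun i _ => add_comm (1:A) (u i)), Finset.prod_add]
      exact Finset.sum_congr rfl fun T hT => by simp [hw]
    have h2 : ((∏ i ∈ S, (1 + u i)) - 1) = ∑ T ∈ S.powerset.erase ∅, w T := by
      rw [h1, ← Finset.add_sum_erase _ w (Finset.empty_mem_powerset S)]
      simp [hw]
    rw [h2]
    have h3 : (∑ T ∈ S.powerset.erase ∅, w T) ^ m
        = ∏ _j : Fin m, (∑ T ∈ S.powerset.erase ∅, w T) := by
      simp [Finset.prod_const]
    rw [h3, Finset.prod_univ_sum]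
  -- step 2 : as sum over D with indicator
  have step2 : ∀ S : Finset (Fin m),
      ∑ f ∈ Fintype.piFinset (fun _ : Fin m => S.powerset.erase ∅), W f
        = ∑ f ∈ D, if (∀ j, f j ⊆ S) then W f else 0 := by
    intro S
    rw [← Finset.sum_filter]
    apply Finset.sum_congr _ (fun _ _ => rfl)
    ext f
    simp only [Fintype.mem_piFinset, Finset.mem_erase, Finset.mem_powerset, Finset.mem_filter, hD]
    constructor
    · intro h
      exact ⟨fun j => ⟨(h j).1, Finset.subset_univ _⟩, fun j => (h j).2⟩
    · intro h
      exact fun j => ⟨(h.1 j).1, h.2 j⟩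
  -- assemble
  have hE : ∑ S : Finset (Fin m), (-1 : ℤ)^(m - S.card) • ((∏ i ∈ S, (1 + u i)) - 1) ^ m
      = ∑ f ∈ D.filter (fun f => Finset.univ.sup f = Finset.univ), W f := by
    calc ∑ S : Finset (Fin m), (-1 : ℤ)^(m - S.card) • ((∏ i ∈ S, (1 + u i)) - 1) ^ m
        = ∑ S : Finset (Fin m), ∑ f ∈ D,
            (-1 : ℤ)^(m - S.card) • (if (∀ j, f j ⊆ S) then W f else 0) := by
          refine Finset.sum_congr rfl fun S _ => ?_
          rw [step1, step2, Finset.smul_sum]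
      _ = ∑ f ∈ D, ∑ S : Finset (Fin m),
            (-1 : ℤ)^(m - S.card) • (if (∀ j, f j ⊆ S) then W f else 0) := Finset.sum_comm
      _ = ∑ f ∈ D, (if Finset.univ.sup f = Finset.univ then (1:ℤ) else 0) • W f := by
          refine Finset.sum_congr rfl fun f _ => ?_
          have hcond : ∀ S : Finset (Fin m), (∀ j, f j ⊆ S) ↔ Finset.univ.sup f ⊆ S := by
            intro S
            constructor
            · intro h
              exact Finset.sup_le fun j _ => h j
            · intro h j
              exact le_trans (Finset.le_sup (Finset.mem_univ j)) h
          have : ∀ S : Finset (Fin m),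
              (-1 : ℤ)^(m - S.card) • (if (∀ j, f j ⊆ S) then W f else 0)
              = (if Finset.univ.sup f ⊆ S then (-1 : ℤ)^(m - S.card) else 0) • W f := by
            intro S
            by_cases h : ∀ j, f j ⊆ S
            · rw [if_pos h, if_pos ((hcond S).mp h)]
            · rw [if_neg h, if_neg (fun hh => h ((hcond S).mpr hh)), smul_zero, zero_smul]
          rw [Finset.sum_congr rfl fun S _ => this S, ← Finset.sum_smul, moebius_aux]
      _ = ∑ f ∈ D.filter (fun f => Finset.univ.sup f = Finset.univ), W f := by
          rw [Finset.sum_filter]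
          refine Finset.sum_congr rfl fun f _ => ?_
          by_cases h : Finset.univ.sup f = Finset.univ <;> simp [h]
  set P := D.filter (fun f => Finset.univ.sup f = Finset.univ) with hP
  set σf : (Fin m → Finset (Fin m)) → Fin m → Fin m :=
    fun f j => if h : (f j).Nonempty then (f j).min' h else j with hσf
  have hne : ∀ f ∈ P, ∀ j, (f j).Nonempty := by
    intro f hf j
    have hfD : f ∈ D := (Finset.mem_filter.mp hf).1
    have := (Fintype.mem_piFinset.mp hfD) j
    exact Finset.nonempty_iff_ne_empty.mpr (Finset.mem_erase.mp this).1
  have hfj : ∀ f ∈ P, (∀ j, (f j).card = 1) → ∀ j, f j = {σf f j} := by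
    intro f hf hq j
    obtain ⟨a, ha⟩ := Finset.card_eq_one.mp (hq j)
    rw [ha, hσf]
    simp [ha]
  have hbij : ∀ f ∈ P, (∀ j, (f j).card = 1) → Function.Bijective (σf f) := by
    intro f hf hq
    rw [← Finite.surjective_iff_bijective]
    intro x
    have hx : x ∈ Finset.univ.sup f := by
      rw [(Finset.mem_filter.mp hf).2]; exact Finset.mem_univ x
    obtain ⟨j, _, hj⟩ := Finset.mem_sup.mp hx
    refine ⟨j, ?_⟩
    rw [hfj f hf hq j] at hj
    exact (Finset.mem_singleton.mp hj).symm
  have hpart1 : ∑ f ∈ P.filter (fun f => ∀ j, (f j).card = 1), W f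
      = Nat.factorial m • ∏ i, u i := by
    have heq : ∑ f ∈ P.filter (fun f => ∀ j, (f j).card = 1), W f
        = ∑ _σ ∈ (Finset.univ : Finset (Equiv.Perm (Fin m))), ∏ i, u i := by
      refine Finset.sum_bij'
        (i := fun f hf => Equiv.ofBijective (σf f)
          (hbij f (Finset.mem_filter.mp hf).1 (Finset.mem_filter.mp hf).2))
        (j := fun σ _ => fun j => ({σ j} : Finset (Fin m)))
        (fun f hf => Finset.mem_univ _) ?_ ?_ ?_ ?_
      · intro σ _
        refine Finset.mem_filter.mpr ⟨Finset.mem_filter.mpr ⟨?_, ?_⟩, fun j => Finset.card_singleton _⟩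
        · refine Fintype.mem_piFinset.mpr fun j => Finset.mem_erase.mpr
            ⟨Finset.singleton_ne_empty _, Finset.mem_powerset.mpr (Finset.subset_univ _)⟩
        · apply Finset.eq_univ_of_forall
          intro x
          exact Finset.mem_sup.mpr ⟨σ.symm x, Finset.mem_univ _,
            Finset.mem_singleton.mpr (σ.apply_symm_apply x).symm⟩
      · intro f hf
        funext j
        exact (hfj f (Finset.mem_filter.mp hf).1 (Finset.mem_filter.mp hf).2 j).symm
      · intro σ _
        ext j
        simp [hσf]
      · intro f hf
        have h1 : W f = ∏ j, u (σf f j) := by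
          refine Finset.prod_congr rfl fun j _ => ?_
          rw [hw]
          simp only []
          rw [hfj f (Finset.mem_filter.mp hf).1 (Finset.mem_filter.mp hf).2 j,
            Finset.prod_singleton]
        rw [h1]
        exact Equiv.prod_comp (Equiv.ofBijective (σf f)
          (hbij f (Finset.mem_filter.mp hf).1 (Finset.mem_filter.mp hf).2)) u
    rw [heq, Finset.sum_const, Finset.card_univ, Fintype.card_perm, Fintype.card_fin]
  have hpart2 : ∀ f ∈ P.filter (fun f => ¬ ∀ j, (f j).card = 1),
      W f ∈ Ideal.span (Set.range u) ^ (m + 1) := by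
    intro f hf
    obtain ⟨hfP, hnq⟩ := Finset.mem_filter.mp hf
    have h1 : ∀ j, w (f j) ∈ Ideal.span (Set.range u) ^ (f j).card := by
      intro j
      exact prod_mem_pow_card _ _ _ fun i _ =>
        Ideal.subset_span (Set.mem_range_self i)
    have h2 : W f ∈ Ideal.span (Set.range u) ^ (∑ j, (f j).card) :=
      prod_mem_pow_sum _ _ _ _ fun j _ => h1 j
    refine Ideal.pow_le_pow_right ?_ h2
    push_neg at hnq
    obtain ⟨j₀, hj₀⟩ := hnq
    have hge : ∀ j, 1 ≤ (f j).card := fun j => Finset.card_pos.mpr (hne f hfP j)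
    have hlt : (Finset.univ : Finset (Fin m)).sum (fun _ => 1) < ∑ j, (f j).card := by
      refine Finset.sum_lt_sum (fun j _ => hge j) ⟨j₀, Finset.mem_univ _, ?_⟩
      have := hge j₀
      omega
    simpa [Finset.card_univ] using hlt
  refine ⟨∑ f ∈ P.filter (fun f => ¬ ∀ j, (f j).card = 1), W f,
    Submodule.sum_mem _ hpart2, ?_⟩
  rw [hE, ← Finset.sum_filter_add_sum_filter_not P (fun f => ∀ j, (f j).card = 1), hpart1]

set_option maxHeartbeats 1600000 in
set_option synthInstance.maxHeartbeats 1000000 in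
/-- Let `p` be a prime, `n ≥ 1`, and `G` a commutative subgroup of `GL n (ZMod p)`.
Regarding elements of `G` as `n × n` matrices over `ZMod p`, the following are equivalent:
(1) `1 + g + g² + ⋯ + g^(p-1) = 0` for every `g ∈ G`;
(2) `(g - 1)^(p-1) = 0` for every `g ∈ G`;
(3) `(g₁-1)(g₂-1)⋯(g_(p-1)-1) = 0` for all `g₁, …, g_(p-1) ∈ G`;
(4) the same for all `g₁, …, g_(p-1)` taken from any generating set `X` of `G`. -/
theorem abelian_subgroup_GL_tfae
    (p : ℕ) (hp : p.Prime) (n : ℕ) (hn : 1 ≤ n)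
    (G : Subgroup (GL (Fin n) (ZMod p)))
    (hcomm : ∀ a ∈ G, ∀ b ∈ G, a * b = b * a) :
    List.TFAE
      [∀ g ∈ G, ∑ i ∈ Finset.range p, ((g : Matrix (Fin n) (Fin n) (ZMod p)) ^ i) = 0,
       ∀ g ∈ G, ((g : Matrix (Fin n) (Fin n) (ZMod p)) - 1) ^ (p - 1) = 0,
       ∀ g : Fin (p - 1) → GL (Fin n) (ZMod p), (∀ i, g i ∈ G) →
         (List.ofFn fun i => ((g i : Matrix (Fin n) (Fin n) (ZMod p)) - 1)).prod = 0,
       ∀ X : Set (GL (Fin n) (ZMod p)), Subgroup.closure X = G →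
         ∀ g : Fin (p - 1) → GL (Fin n) (ZMod p), (∀ i, g i ∈ X) →
           (List.ofFn fun i => ((g i : Matrix (Fin n) (Fin n) (ZMod p)) - 1)).prod = 0] := by
  haveI := Fact.mk hp
  haveI : NeZero p := ⟨hp.ne_zero⟩
  classical
  tfae_have 1 → 2 := by
    intro h1 g hg
    rw [← geom_aux p hp _ (g : Matrix (Fin n) (Fin n) (ZMod p))]
    exact h1 g hg
  tfae_have 2 → 1 := by
    intro h2 g hg
    rw [geom_aux p hp _ (g : Matrix (Fin n) (Fin n) (ZMod p))]
    exact h2 g hg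
  tfae_have 3 → 2 := by
    intro h3 g hg
    have := h3 (fun _ => g) (fun _ => hg)
    rwa [List.ofFn_const, List.prod_replicate] at this
  tfae_have 3 → 4 := by
    intro h3 X hX g hg
    exact h3 g fun i => hX ▸ Subgroup.subset_closure (hg i)
  tfae_have 4 → 3 := by
    intro h4 g hg
    exact h4 (SetLike.coe G) (Subgroup.closure_eq G) g hg
  tfae_have 2 → 3 := by
    intro h2 g hg
    set s : Set (Matrix (Fin n) (Fin n) (ZMod p)) :=
      (fun h : GL (Fin n) (ZMod p) => (h : Matrix (Fin n) (Fin n) (ZMod p))) '' (SetLike.coe G)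
      with hs
    have hscomm : ∀ a ∈ s, ∀ b ∈ s, a * b = b * a := by
      rintro _ ⟨a', ha', rfl⟩ _ ⟨b', hb', rfl⟩
      have := congrArg Units.val (hcomm a' ha' b' hb')
      simpa using this
    letI : CommRing (Algebra.adjoin (ZMod p) s) := Algebra.adjoinCommRingOfComm (ZMod p) hscomm
    have hmemB : ∀ h : GL (Fin n) (ZMod p), h ∈ G →
        ((h : Matrix (Fin n) (Fin n) (ZMod p)) - 1) ∈ Algebra.adjoin (ZMod p) s := by
      intro h hh
      exact Subalgebra.sub_mem _ (Algebra.subset_adjoin ⟨h, hh, rfl⟩) (Subalgebra.one_mem _)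
    set S' : Set (Algebra.adjoin (ZMod p) s) :=
      {x | ∃ h : GL (Fin n) (ZMod p), h ∈ G ∧
        (x : Matrix (Fin n) (Fin n) (ZMod p)) = (h : Matrix (Fin n) (Fin n) (ZMod p)) - 1}
      with hS'
    set I : Ideal (Algebra.adjoin (ZMod p) s) := Ideal.span S' with hI
    have hS'nil : ∀ x ∈ S', x ^ (p - 1) = 0 := by
      rintro x ⟨h, hh, hx⟩
      apply Subtype.ext
      simp only [SubmonoidClass.coe_pow, ZeroMemClass.coe_zero]
      rw [hx]
      exact h2 h hh
    have happ : ∀ v : Fin (p-1) → Algebra.adjoin (ZMod p) s, (∀ i, v i ∈ S') →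
        (∏ i, v i) ∈ I ^ p := by
      intro v hv
      obtain ⟨z, hz, hsum⟩ := key_identity (p-1) v
      choose gs hgs1 hgs2 using hv
      have hprodG : ∀ S : Finset (Fin (p-1)), ∃ hU, hU ∈ G ∧
          ((∏ i ∈ S, (1 + v i) : Algebra.adjoin (ZMod p) s) : Matrix (Fin n) (Fin n) (ZMod p))
            = (hU : Matrix (Fin n) (Fin n) (ZMod p)) := by
        intro S
        induction S using Finset.induction with
        | empty => exact ⟨1, one_mem G, by simp⟩
        | insert _ _ hni ih =>
          rename_i a T
          obtain ⟨hU, hUG, hUc⟩ := ih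
          refine ⟨gs a * hU, mul_mem (hgs1 a) hUG, ?_⟩
          rw [Finset.prod_insert hni]
          have hcm : (((1 + v a) * ∏ i ∈ T, (1 + v i) : Algebra.adjoin (ZMod p) s) :
              Matrix (Fin n) (Fin n) (ZMod p))
              = ((1 + v a : Algebra.adjoin (ZMod p) s) : Matrix (Fin n) (Fin n) (ZMod p))
                * ((∏ i ∈ T, (1 + v i) : Algebra.adjoin (ZMod p) s) :
                    Matrix (Fin n) (Fin n) (ZMod p)) := rfl
          rw [hcm, hUc]
          have h1v : ((1 + v a : Algebra.adjoin (ZMod p) s) :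
              Matrix (Fin n) (Fin n) (ZMod p))
              = (gs a : Matrix (Fin n) (Fin n) (ZMod p)) := by
            have : ((1 + v a : Algebra.adjoin (ZMod p) s) :
                Matrix (Fin n) (Fin n) (ZMod p))
                = 1 + ((v a : Matrix (Fin n) (Fin n) (ZMod p))) := rfl
            rw [this, hgs2 a]
            abel
          rw [h1v, Units.val_mul]
      have hL0 : ∑ S : Finset (Fin (p-1)),
          (-1 : ℤ)^((p-1) - S.card) • ((∏ i ∈ S, (1 + v i)) - 1)^(p-1) = 0 := by
        refine Finset.sum_eq_zero fun S _ => ?_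
        obtain ⟨hU, hUG, hUc⟩ := hprodG S
        have h0 : ((∏ i ∈ S, (1 + v i) : Algebra.adjoin (ZMod p) s) - 1) ^ (p-1) = 0 := by
          apply Subtype.ext
          simp only [SubmonoidClass.coe_pow, AddSubgroupClass.coe_sub, OneMemClass.coe_one,
            ZeroMemClass.coe_zero]
          rw [hUc]
          exact h2 hU hUG
        rw [h0, smul_zero]
      rw [hL0] at hsum
      have hfact : (Nat.factorial (p-1)) • (∏ i, v i : Algebra.adjoin (ZMod p) s)
          = - ∏ i, v i := by
        rw [nsmul_eq_mul]
        have hcast : ((Nat.factorial (p-1) : ℕ) : Algebra.adjoin (ZMod p) s)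
            = algebraMap (ZMod p) _ ((Nat.factorial (p-1) : ℕ) : ZMod p) :=
          (map_natCast (algebraMap (ZMod p) (Algebra.adjoin (ZMod p) s)) _).symm
        rw [hcast, ZMod.wilsons_lemma, map_neg, map_one]
        ring
      rw [hfact] at hsum
      have hzz : z = ∏ i, v i := by linear_combination -hsum
      have hrange : Set.range v ⊆ S' := by
        rintro _ ⟨i, rfl⟩
        exact ⟨gs i, hgs1 i, hgs2 i⟩
      have hle : Ideal.span (Set.range v) ^ ((p-1)+1) ≤ I ^ p := by
        rw [Nat.sub_add_cancel hp.one_le]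
        exact Ideal.pow_right_mono (Ideal.span_mono hrange) p
      exact hzz ▸ hle hz
    have hspan : I ^ (p-1) ≤ I ^ p := by
      have hsp : I ^ (p-1) = Ideal.span (S' ^ (p-1)) := Submodule.span_pow S' (p-1)
      rw [hsp, Ideal.span_le]
      intro x hx
      obtain ⟨f, hf⟩ := Set.mem_pow.mp hx
      have hofn : (List.ofFn fun i => ((f i : S') : Algebra.adjoin (ZMod p) s)).prod
          = ∏ i, ((f i : S') : Algebra.adjoin (ZMod p) s) := List.prod_ofFn
      rw [← hf, hofn]
      exact happ _ (fun i => (f i).2)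
    have hchain : ∀ k, I ^ (p-1) ≤ I ^ ((p-1) + k) := by
      intro k
      induction k with
      | zero => simp
      | succ k ih =>
        have h1 : I ^ ((p-1) + (k+1)) = I ^ ((p-1) + k) * I := by
          rw [show p-1+(k+1) = (p-1+k)+1 from by omega, pow_succ]
        rw [h1]
        calc I ^ (p-1) ≤ I ^ p := hspan
          _ = I ^ (p-1) * I := by rw [← pow_succ, Nat.sub_add_cancel hp.one_le]
          _ ≤ I ^ ((p-1)+k) * I := Ideal.mul_mono_left ih
    haveI : IsNoetherianRing (Algebra.adjoin (ZMod p) s) :=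
      isNoetherianRing_iff.mpr inferInstance
    obtain ⟨k, hk⟩ := IsNoetherianRing.isNilpotent_nilradical (Algebra.adjoin (ZMod p) s)
    have hIrad : I ≤ nilradical (Algebra.adjoin (ZMod p) s) :=
      Ideal.span_le.mpr fun x hx => mem_nilradical.mpr ⟨p-1, hS'nil x hx⟩
    have hzero : I ^ ((p-1) + k) = ⊥ := by
      apply le_bot_iff.mp
      calc I ^ ((p-1)+k) ≤ (nilradical _) ^ ((p-1)+k) := Ideal.pow_right_mono hIrad _
        _ ≤ (nilradical _) ^ k := Ideal.pow_le_pow_right (by omega)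
        _ = ⊥ := by rw [hk, Submodule.zero_eq_bot]
    set v : Fin (p-1) → Algebra.adjoin (ZMod p) s :=
      fun i => ⟨(g i : Matrix (Fin n) (Fin n) (ZMod p)) - 1, hmemB (g i) (hg i)⟩ with hv
    have hvS : ∀ i, v i ∈ S' := fun i => ⟨g i, hg i, rfl⟩
    have hprod0 : (∏ i, v i) = 0 := by
      have h1 : (∏ i, v i) ∈ I ^ (p-1) := by
        have := prod_mem_pow_card I Finset.univ v (fun i _ => Ideal.subset_span (hvS i))
        simpa [Finset.card_univ] using this
      have h3 := hchain k h1
      rw [hzero] at h3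
      simpa using h3
    have hlist : (List.ofFn fun i => ((g i : Matrix (Fin n) (Fin n) (ZMod p)) - 1))
        = (List.ofFn v).map (Algebra.adjoin (ZMod p) s).val := by
      rw [List.map_ofFn]
      rfl
    rw [hlist, ← map_list_prod, List.prod_ofFn, hprod0, map_zero]
  tfae_finish
end

section
/- Let p be a prime, n ≥ 1, G a commutative subgroup of GL_n(ZMod p), r an integer with 1 ≤ r ≤ p − 1, and M an n×n matrix over ZMod p. If (g − 1)^r * M = 0 for all g ∈ G, then (g − 1)^{r−1} * (h − 1) * M = 0 for all g, h ∈ G; consequently (g₁ − 1)(g₂ − 1)⋯(g_r − 1) * M = 0 for all g₁, …, g_r ∈ G. -/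
open Polynomial Finset
noncomputable def Qpoly (p k : ℕ) : Polynomial (ZMod p) :=
  C ((Nat.factorial k : ZMod p))⁻¹ * ∏ i ∈ range k, (X - C (i : ZMod p))

lemma Qpoly_natDegree_le (p k : ℕ) : (Qpoly p k).natDegree ≤ k := by
  refine (natDegree_C_mul_le _ _).trans ?_
  refine (natDegree_prod_le _ _).trans ?_
  refine le_trans (Finset.sum_le_card_nsmul _ _ 1 ?_) (by simp)
  intro i _
  exact natDegree_X_sub_C_le _

lemma descFact_cast (p s k : ℕ) :
    ((s.descFactorial k : ZMod p)) = ∏ i ∈ range k, ((s : ZMod p) - (i : ZMod p)) := by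
  induction k with
  | zero => simp
  | succ k ih =>
    rw [Nat.descFactorial_succ, Finset.prod_range_succ, ← ih]
    rcases le_or_gt k s with h | h
    · push_cast [Nat.cast_sub h]; ring
    · have h0 : s.descFactorial k = 0 := Nat.descFactorial_eq_zero_iff_lt.2 h
      rw [Nat.sub_eq_zero_of_le h.le, h0]
      simp

lemma fact_ne_zero' {p k : ℕ} (hp : p.Prime) (hk : k < p) :
    ((Nat.factorial k : ZMod p)) ≠ 0 := by
  rw [Ne, ZMod.natCast_eq_zero_iff]
  intro h
  exact absurd ((Nat.Prime.dvd_factorial hp).1 h) (by omega)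

lemma Qpoly_eval {p k : ℕ} (hp : p.Prime) (hk : k < p) (s : ℕ) :
    (Qpoly p k).eval (s : ZMod p) = (s.choose k : ZMod p) := by
  haveI : Fact p.Prime := ⟨hp⟩
  have hfac : ((Nat.factorial k : ZMod p)) * (s.choose k : ZMod p)
      = ((s.descFactorial k : ZMod p)) := by
    rw [← Nat.cast_mul, Nat.descFactorial_eq_factorial_mul_choose]
  have hne := fact_ne_zero' hp hk
  rw [Qpoly, eval_mul, eval_C, eval_prod]
  simp only [eval_sub, eval_X, eval_C]
  rw [← descFact_cast, ← hfac, ← mul_assoc, inv_mul_cancel₀ hne, one_mul]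

lemma Qpoly_zero_coeff_one (p : ℕ) : (Qpoly p 0).coeff 1 = 0 := by
  simp [Qpoly, coeff_one]

lemma Qpoly_one_coeff_one (p : ℕ) : (Qpoly p 1).coeff 1 = 1 := by
  simp [Qpoly]

lemma coeff_one_comp {R : Type*} [CommSemiring R] (P : Polynomial R) (a : R) :
    (P.comp (C a * X)).coeff 1 = a * P.coeff 1 := by
  rw [comp_eq_sum_left, Polynomial.sum_def, finset_sum_coeff]
  have : ∀ e ∈ P.support, (C (P.coeff e) * (C a * X) ^ e).coeff 1
      = if e = 1 then a * P.coeff 1 else 0 := by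
    intro e _
    rw [mul_pow, ← C_pow, ← mul_assoc, ← C_mul, coeff_C_mul, coeff_X_pow]
    by_cases h : e = 1 <;> simp [h, eq_comm, mul_comm]
  rw [Finset.sum_congr rfl this, Finset.sum_ite_eq' P.support 1 fun _ => a * P.coeff 1]
  by_cases h : 1 ∈ P.support
  · simp [h]
  · simp [h, Polynomial.notMem_support_iff.1 h]

lemma vand_coeffs {p : ℕ} (hp : p.Prime) {n : ℕ}
    (c : ℕ → Matrix (Fin n) (Fin n) (ZMod p))
    (h : ∀ s : ZMod p, ∑ d ∈ range p, s ^ d • c d = 0) :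
    ∀ d, d < p → c d = 0 := by
  haveI : Fact p.Prime := ⟨hp⟩
  intro d hd
  ext a b
  set P : Polynomial (ZMod p) := ∑ e ∈ range p, monomial e (c e a b) with hP
  have hdeg : P.natDegree < p := by
    have : P.natDegree ≤ p - 1 := by
      refine natDegree_sum_le_of_forall_le _ _ ?_
      intro e he
      exact (natDegree_monomial_le _).trans (by simp at he; omega)
    omega
  have heval : ∀ s : ZMod p, P.eval s = 0 := by
    intro s
    have := congrFun (congrFun (h s) a) b
    simp only [Matrix.sum_apply, Matrix.smul_apply, Matrix.zero_apply, smul_eq_mul] at this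
    rw [hP, eval_finset_sum]
    simpa [eval_monomial, mul_comm] using this
  have hP0 : P = 0 := by
    refine P.eq_zero_of_natDegree_lt_card_of_eval_eq_zero (f := id) Function.injective_id
      (fun i => heval i) ?_
    rwa [ZMod.card]
  have := congrArg (fun q => Polynomial.coeff q d) hP0
  simp only [hP, finset_sum_coeff, coeff_monomial, coeff_zero] at this
  rw [Finset.sum_ite_eq' (range p) d] at this
  simpa [hd] using this

section L1
variable {p n r : ℕ}
abbrev Amat (p n : ℕ) := Matrix (Fin n) (Fin n) (ZMod p)

lemma expand_pow_L1 (hp : p.Prime) (hr2 : r ≤ p - 1)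
    (y : Amat p n) (s : ℕ) (m' : Amat p n) (hy : y ^ r * m' = 0) :
    (1 + y) ^ s * m' = ∑ k ∈ range r, (Qpoly p k).eval (s : ZMod p) • (y ^ k * m') := by
  have hb := (Commute.one_right y).add_pow s
  have h1 : (1 + y) ^ s * m' = ∑ k ∈ range (s + 1), ((s.choose k : ZMod p)) • (y ^ k * m') := by
    rw [add_comm 1 y, hb, Finset.sum_mul]
    refine Finset.sum_congr rfl fun k _ => ?_
    rw [one_pow, mul_one, (Nat.cast_commute (s.choose k) (y ^ k)).symm.eq, mul_assoc,
      ← nsmul_eq_mul, ← Nat.cast_smul_eq_nsmul (ZMod p)]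
  rw [h1]
  have e1 : ∑ k ∈ range (s + 1), ((s.choose k : ZMod p)) • (y ^ k * m')
      = ∑ k ∈ range (max (s + 1) r), ((s.choose k : ZMod p)) • (y ^ k * m') := by
    refine Finset.sum_subset (Finset.range_subset_range.2 (le_max_left _ _)) ?_
    intro k hk hk2
    simp only [mem_range] at hk hk2
    have : s < k := by omega
    simp [Nat.choose_eq_zero_of_lt this]
  have e2 : ∑ k ∈ range (max (s + 1) r), ((s.choose k : ZMod p)) • (y ^ k * m')
      = ∑ k ∈ range r, ((s.choose k : ZMod p)) • (y ^ k * m') := by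
    refine (Finset.sum_subset (Finset.range_subset_range.2 (le_max_right _ _)) ?_).symm
    intro k hk hk2
    simp only [mem_range] at hk hk2
    have hyk : y ^ k * m' = 0 := by
      have : y ^ k = y ^ (k - r) * y ^ r := by rw [← pow_add]; congr 1; omega
      rw [this, mul_assoc, hy, mul_zero]
    simp [hyk]
  rw [e1, e2]
  refine Finset.sum_congr rfl fun k hk => ?_
  rw [Qpoly_eval hp (by simp only [mem_range] at hk; omega)]
end L1

lemma core_lemma {p : ℕ} (hp : p.Prime) {n r : ℕ} (hr1 : 2 ≤ r) (hr2 : r ≤ p - 1)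
    (x y m : Amat p n) (hc : Commute x y)
    (hx : x ^ r * m = 0) (hy : y ^ r * m = 0)
    (hxy : ∀ t : ℕ, ((1 + x) * (1 + y) ^ t - 1) ^ r * m = 0) :
    x ^ (r - 1) * (y * m) = 0 := by
  haveI : Fact p.Prime := ⟨hp⟩
  have hp2 : 2 ≤ p := hp.two_le
  have hrp : r < p := by omega
  set α : ℕ → ZMod p := fun j => (-1) ^ (r - j) * (r.choose j : ZMod p) with hα
  set q : ℕ → ZMod p := fun k => (Qpoly p k).coeff 1 with hq
  set v : ℕ → ℕ → Amat p n := fun j k => (1 + x) ^ j * (y ^ k * m) with hv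
  set Rjk : ℕ → ℕ → Polynomial (ZMod p) :=
    fun j k => C (α j) * ((Qpoly p k).comp (C (j : ZMod p) * X)) with hRjk
  set c : ℕ → Amat p n :=
    fun d => ∑ j ∈ range (r + 1), ∑ k ∈ range r, (Rjk j k).coeff d • v j k with hcdef
  have hcxy1 : Commute (1 + x) (1 + y) :=
    Commute.add_left (Commute.one_left _) (Commute.add_right (Commute.one_right x) hc)
  -- main expansion
  have E : ∀ t : ℕ,
      (∑ j ∈ range (r + 1), ∑ k ∈ range r, ((Rjk j k).eval ((t : ZMod p))) • v j k) = 0 := by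
    intro t
    have h0 := hxy t
    have hsub : (1 + x) * (1 + y) ^ t - 1 = (1 + x) * (1 + y) ^ t + (-1) := by
      rw [sub_eq_add_neg]
    have hexp := (Commute.neg_one_right ((1 + x) * (1 + y) ^ t)).add_pow r
    rw [hsub, hexp, Finset.sum_mul] at h0
    refine Eq.trans (Finset.sum_congr rfl ?_) h0
    intro j hj
    have hBj : ((1 + x) * (1 + y) ^ t) ^ j = (1 + x) ^ j * (1 + y) ^ (t * j) := by
      rw [(hcxy1.pow_right t).mul_pow, ← pow_mul]
    calc ∑ k ∈ range r, ((Rjk j k).eval ((t : ZMod p))) • v j k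
        = ∑ k ∈ range r, (α j * (Qpoly p k).eval (((t * j : ℕ) : ZMod p))) • v j k := by
          refine Finset.sum_congr rfl fun k _ => ?_
          rw [hRjk]
          simp only [eval_mul, eval_C, eval_comp, eval_mul, eval_X]
          congr 2
          push_cast
          ring_nf
      _ = α j • ((1 + x) ^ j * ((1 + y) ^ (t * j) * m)) := by
          rw [expand_pow_L1 hp hr2 y (t * j) m hy, Finset.mul_sum, Finset.smul_sum]
          refine Finset.sum_congr rfl fun k _ => ?_
          rw [hv, mul_smul_comm, smul_smul]
      _ = ((1 + x) * (1 + y) ^ t) ^ j * (-1) ^ (r - j) * (r.choose j : Amat p n) * m := by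
          rw [hBj]
          have hcast : ((-1 : Amat p n) ^ (r - j) * (r.choose j : Amat p n))
              = algebraMap (ZMod p) (Amat p n) (α j) := by
            rw [hα]
            simp [map_mul, map_pow, map_neg, map_one, map_natCast]
          rw [mul_assoc ((1 + x) ^ j * (1 + y) ^ (t * j)), hcast, ← Algebra.commutes, mul_assoc,
            ← Algebra.smul_def, mul_assoc]
  have hdeg : ∀ j k, k < r → (Rjk j k).natDegree < p := by
    intro j k hk
    have h1 : (Rjk j k).natDegree ≤ k * 1 := by
      rw [hRjk]
      refine (natDegree_C_mul_le _ _).trans ?_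
      refine natDegree_comp_le.trans ?_
      exact Nat.mul_le_mul (Qpoly_natDegree_le p k) ((natDegree_C_mul_le _ _).trans natDegree_X_le)
    omega
  have hvand0 : ∀ s : ZMod p, ∑ d ∈ range p, s ^ d • c d = 0 := by
    intro s
    obtain ⟨t, ht⟩ : ∃ t : ℕ, (t : ZMod p) = s := ⟨s.val, ZMod.natCast_rightInverse s⟩
    have heq : ∑ d ∈ range p, s ^ d • c d
        = ∑ j ∈ range (r + 1), ∑ k ∈ range r, ((Rjk j k).eval s) • v j k := by
      simp only [hcdef, Finset.smul_sum]
      rw [Finset.sum_comm]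
      refine Finset.sum_congr rfl fun j hj => ?_
      rw [Finset.sum_comm]
      refine Finset.sum_congr rfl fun k hk => ?_
      rw [eval_eq_sum_range' (hdeg j k (mem_range.1 hk)), Finset.sum_smul]
      refine Finset.sum_congr rfl fun d hd => ?_
      rw [smul_smul, mul_comm]
    rw [heq, ← ht]
    exact E t
  have hc10 : c 1 = 0 := vand_coeffs hp c hvand0 1 (by omega)
  -- compute c 1 as product
  set W : Amat p n := ∑ k ∈ range r, q k • (y ^ k * m) with hW
  set U : Amat p n := ∑ j ∈ range (r + 1), (α j * (j : ZMod p)) • (1 + x) ^ j with hU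
  have hc1' : c 1 = U * W := by
    rw [hcdef, hU, hW, Finset.sum_mul_sum]
    refine Finset.sum_congr rfl fun j _ => Finset.sum_congr rfl fun k _ => ?_
    rw [smul_mul_smul_comm, hRjk]
    simp only []
    rw [coeff_C_mul, coeff_one_comp]
    rw [hv]
    simp only []
    congr 1
    rw [hq]
    ring
  have hUval : U = (r : ZMod p) • ((1 + x) * x ^ (r - 1)) := by
    rw [hU, Finset.sum_range_succ']
    have h0 : (α 0 * ((0 : ℕ) : ZMod p)) • (1 + x) ^ 0 = 0 := by simp
    rw [h0, add_zero]
    have hβ : ∀ i ∈ range r, (α (i + 1) * ((i + 1 : ℕ) : ZMod p)) • (1 + x) ^ (i + 1)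
        = ((r : ZMod p) * ((-1) ^ (r - 1 - i) * ((r - 1).choose i : ZMod p)))
            • ((1 + x) * (1 + x) ^ i) := by
      intro i hi
      have hi' : i < r := mem_range.1 hi
      have hnat : (r.choose (i + 1)) * (i + 1) = r * ((r - 1).choose i) := by
        have h := Nat.add_one_mul_choose_eq (r - 1) i
        rw [show r - 1 + 1 = r from by omega] at h
        exact h.symm
      have h2 : (r.choose (i + 1) : ZMod p) * ((i + 1 : ℕ) : ZMod p)
          = (r : ZMod p) * (((r - 1).choose i : ℕ) : ZMod p) := by
        exact_mod_cast congrArg (Nat.cast : ℕ → ZMod p) hnat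
      rw [pow_succ' (1 + x) i]
      congr 1
      rw [hα]
      simp only []
      rw [show r - (i + 1) = r - 1 - i from by omega, mul_assoc, h2]
      ring
    rw [Finset.sum_congr rfl hβ]
    have hbin : ∑ i ∈ range r,
        ((-1 : ZMod p) ^ (r - 1 - i) * ((r - 1).choose i : ZMod p)) • (1 + x) ^ i
        = x ^ (r - 1) := by
      have hexp := (Commute.neg_one_right (1 + x)).add_pow (r - 1)
      have h1 : (1 + x) + (-1 : Amat p n) = x := by abel
      rw [h1, show r - 1 + 1 = r from by omega] at hexp
      rw [hexp]
      refine Finset.sum_congr rfl fun i hi => ?_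
      have hcast : ((-1 : Amat p n) ^ (r - 1 - i) * (((r - 1).choose i : ℕ) : Amat p n))
          = algebraMap (ZMod p) (Amat p n)
              ((-1) ^ (r - 1 - i) * (((r - 1).choose i : ℕ) : ZMod p)) := by
        simp [map_mul, map_pow]
      rw [Algebra.smul_def, Algebra.commutes, ← hcast, ← mul_assoc]
    rw [← hbin, Finset.mul_sum, Finset.smul_sum]
    refine Finset.sum_congr rfl fun i hi => ?_
    rw [mul_smul_comm, smul_smul]
  have hr0 : (r : ZMod p) ≠ 0 := by
    rw [Ne, ZMod.natCast_eq_zero_iff]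
    intro hdvd
    have := Nat.le_of_dvd (by omega) hdvd
    omega
  have hZ : (1 + x) * x ^ (r - 1) * W = 0 := by
    have h1 : c 1 = (r : ZMod p) • ((1 + x) * x ^ (r - 1) * W) := by
      rw [hc1', hUval, smul_mul_assoc]
    rw [hc10] at h1
    have h2 := congrArg (fun z => (r : ZMod p)⁻¹ • z) h1.symm
    simpa [smul_smul, inv_mul_cancel₀ hr0] using h2
  have hxrW : x ^ r * W = 0 := by
    rw [hW, Finset.mul_sum]
    refine Finset.sum_eq_zero fun k hk => ?_
    rw [mul_smul_comm, ← mul_assoc, (hc.pow_pow r k).eq, mul_assoc, hx, mul_zero, smul_zero]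
  have hxW : x ^ (r - 1) * W = 0 := by
    have hsplit : (1 + x) * x ^ (r - 1) = x ^ (r - 1) + x ^ r := by
      rw [add_mul, one_mul]
      congr 1
      rw [← pow_succ']
      congr 1
      omega
    rw [hsplit, add_mul, hxrW, add_zero] at hZ
    exact hZ
  set w : Amat p n := ∑ k ∈ Finset.Ico 2 r, q k • y ^ (k - 1) with hw
  set vv : Amat p n := ∑ k ∈ Finset.Ico 2 r, q k • y ^ (k - 2) with hvv
  have hwv : w = y * vv := by
    rw [hw, hvv, Finset.mul_sum]
    refine Finset.sum_congr rfl fun k hk => ?_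
    have hk2 : 2 ≤ k := (Finset.mem_Ico.1 hk).1
    rw [mul_smul_comm]
    congr 1
    rw [← pow_succ']
    congr 1
    omega
  have hq0 : q 0 = 0 := Qpoly_zero_coeff_one p
  have hq1 : q 1 = 1 := Qpoly_one_coeff_one p
  have hWsplit : W = y * m + y * (w * m) := by
    rw [hW, Finset.range_eq_Ico, ← Finset.sum_Ico_consecutive _ (by omega : (0:ℕ) ≤ 2) hr1]
    congr 1
    · rw [← Finset.range_eq_Ico, Finset.sum_range_succ, Finset.sum_range_one, hq0, hq1,
        zero_smul, one_smul, zero_add, pow_one]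
    · rw [hw, Finset.sum_mul, Finset.mul_sum]
      refine Finset.sum_congr rfl fun k hk => ?_
      have hk2 : 2 ≤ k := (Finset.mem_Ico.1 hk).1
      rw [smul_mul_assoc, mul_smul_comm]
      congr 1
      rw [← mul_assoc, ← pow_succ']
      congr 2
      omega
  have hE2 : x ^ (r - 1) * (y * ((1 + w) * m)) = 0 := by
    have h1 : y * ((1 + w) * m) = W := by
      rw [hWsplit, add_mul, one_mul, mul_add]
    rw [h1]
    exact hxW
  have hcyv : Commute y vv := by
    rw [hvv]
    exact Commute.sum_right _ _ _ fun k _ => ((Commute.refl y).pow_right _).smul_right _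
  have hcxw : Commute x w := by
    rw [hw]
    exact Commute.sum_right _ _ _ fun k _ => (hc.pow_right _).smul_right _
  have hcyw : Commute y w := by
    rw [hw]
    exact Commute.sum_right _ _ _ fun k _ => ((Commute.refl y).pow_right _).smul_right _
  have hwrm : w ^ r * m = 0 := by
    rw [hwv, hcyv.mul_pow, (hcyv.pow_pow r r).eq, mul_assoc, hy, mul_zero]
  set S : Amat p n := ∑ i ∈ range r, (-w) ^ i with hS
  have hcxS : Commute (x ^ (r - 1)) S := by
    rw [hS]
    exact Commute.sum_right _ _ _ fun i _ => (hcxw.neg_right).pow_pow (r - 1) i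
  have hcyS : Commute y S := by
    rw [hS]
    exact Commute.sum_right _ _ _ fun i _ => (hcyw.neg_right).pow_right i
  have h1 := geom_sum_mul (-w) r
  rw [← hS] at h1
  have hgeom : S * (1 + w) = 1 - (-w) ^ r := by
    calc S * (1 + w) = S * -(-w - 1) := by rw [neg_sub, sub_neg_eq_add]
      _ = -(S * (-w - 1)) := by rw [mul_neg]
      _ = -((-w) ^ r - 1) := by rw [h1]
      _ = 1 - (-w) ^ r := by rw [neg_sub]
  have hone : S * (1 + w) + (-w) ^ r = 1 := by rw [hgeom, sub_add_cancel]
  calc x ^ (r - 1) * (y * m)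
      = x ^ (r - 1) * (y * ((S * (1 + w) + (-w) ^ r) * m)) := by rw [hone, one_mul]
    _ = x ^ (r - 1) * (y * (S * ((1 + w) * m))) + x ^ (r - 1) * (y * ((-w) ^ r * m)) := by
        rw [add_mul, mul_assoc S, mul_add, mul_add]
    _ = 0 := by
        have hterm2 : (-w) ^ r * m = 0 := by
          rw [neg_pow, mul_assoc, hwrm, mul_zero]
        have hterm1 : x ^ (r - 1) * (y * (S * ((1 + w) * m)))
            = S * (x ^ (r - 1) * (y * ((1 + w) * m))) := by
          rw [← mul_assoc y S, hcyS.eq, mul_assoc S, ← mul_assoc (x ^ (r - 1)) S, hcxS.eq,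
            mul_assoc]
        rw [hterm1, hE2, mul_zero, hterm2, mul_zero, mul_zero, add_zero]

lemma part1_aux {p : ℕ} (hp : p.Prime) {n : ℕ}
    (G : Subgroup (GL (Fin n) (ZMod p)))
    (hcomm : ∀ a ∈ G, ∀ b ∈ G, a * b = b * a)
    {r : ℕ} (hr1 : 1 ≤ r) (hr2 : r ≤ p - 1)
    (M : Matrix (Fin n) (Fin n) (ZMod p))
    (hM : ∀ g ∈ G, ((g : Matrix (Fin n) (Fin n) (ZMod p)) - 1) ^ r * M = 0)
    (g h : GL (Fin n) (ZMod p)) (hg : g ∈ G) (hh : h ∈ G) :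
    ((g : Matrix (Fin n) (Fin n) (ZMod p)) - 1) ^ (r - 1) *
      ((h : Matrix (Fin n) (Fin n) (ZMod p)) - 1) * M = 0 := by
  rcases eq_or_lt_of_le hr1 with h1 | h1
  · have := hM h hh
    rw [← h1] at this ⊢
    rw [pow_one] at this
    simpa using this
  · set x : Matrix (Fin n) (Fin n) (ZMod p) := (g : Matrix (Fin n) (Fin n) (ZMod p)) - 1 with hxd
    set y : Matrix (Fin n) (Fin n) (ZMod p) := (h : Matrix (Fin n) (Fin n) (ZMod p)) - 1 with hyd
    have hgh : ((g : Matrix (Fin n) (Fin n) (ZMod p))) * h = (h : Matrix (Fin n) (Fin n) (ZMod p)) * g := by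
      have := hcomm g hg h hh
      exact_mod_cast congrArg Units.val this
    have hc : Commute x y := by
      have h₁ : Commute ((g : Matrix (Fin n) (Fin n) (ZMod p))) ((h : Matrix (Fin n) (Fin n) (ZMod p))) := hgh
      exact (h₁.sub_right (Commute.one_right _)).sub_left (Commute.one_left _)
    have hx : x ^ r * M = 0 := hM g hg
    have hy : y ^ r * M = 0 := hM h hh
    have hone_x : (1 : Matrix (Fin n) (Fin n) (ZMod p)) + x = (g : Matrix (Fin n) (Fin n) (ZMod p)) := by
      rw [hxd]; abel
    have hone_y : (1 : Matrix (Fin n) (Fin n) (ZMod p)) + y = (h : Matrix (Fin n) (Fin n) (ZMod p)) := by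
      rw [hyd]; abel
    have hxy : ∀ t : ℕ, ((1 + x) * (1 + y) ^ t - 1) ^ r * M = 0 := by
      intro t
      have hmem : g * h ^ t ∈ G := G.mul_mem hg (G.pow_mem hh t)
      have h2 := hM _ hmem
      have hco : ((g * h ^ t : GL (Fin n) (ZMod p)) : Matrix (Fin n) (Fin n) (ZMod p))
          = (1 + x) * (1 + y) ^ t := by
        rw [Units.val_mul, Units.val_pow_eq_pow_val, hone_x, hone_y]
      rw [hco] at h2
      exact h2
    have := core_lemma hp h1 hr2 x y M hc hx hy hxy
    rw [mul_assoc]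
    exact this

lemma part2_aux {p : ℕ} (hp : p.Prime) {n : ℕ}
    (G : Subgroup (GL (Fin n) (ZMod p)))
    (hcomm : ∀ a ∈ G, ∀ b ∈ G, a * b = b * a) :
    ∀ r : ℕ, 1 ≤ r → r ≤ p - 1 → ∀ M : Matrix (Fin n) (Fin n) (ZMod p),
      (∀ g ∈ G, ((g : Matrix (Fin n) (Fin n) (ZMod p)) - 1) ^ r * M = 0) →
      ∀ g : Fin r → GL (Fin n) (ZMod p), (∀ i, g i ∈ G) →
      (List.ofFn fun i => ((g i : Matrix (Fin n) (Fin n) (ZMod p)) - 1)).prod * M = 0 := by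
  intro r
  induction r with
  | zero => omega
  | succ k ih =>
    intro _ hle M hM g hg
    rcases Nat.eq_zero_or_pos k with hk | hk
    · subst hk
      have := hM (g 0) (hg 0)
      rw [pow_one] at this
      simpa [List.ofFn_succ] using this
    · have hstep : ∀ a ∈ G, ((a : Matrix (Fin n) (Fin n) (ZMod p)) - 1) ^ k *
          (((g (Fin.last k) : Matrix (Fin n) (Fin n) (ZMod p)) - 1) * M) = 0 := by
        intro a ha
        have h2 := part1_aux hp G hcomm (r := k + 1) (by omega) hle M hM a (g (Fin.last k))
          ha (hg (Fin.last k))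
        simpa [mul_assoc] using h2
      set M' : Matrix (Fin n) (Fin n) (ZMod p) :=
        ((g (Fin.last k) : Matrix (Fin n) (Fin n) (ZMod p)) - 1) * M with hM'
      have hM'h : ∀ a ∈ G, ((a : Matrix (Fin n) (Fin n) (ZMod p)) - 1) ^ k * M' = 0 := by
        intro a ha
        rw [hM']
        exact hstep a ha
      have hrec := ih hk (by omega) M' hM'h (fun i => g i.castSucc) (fun i => hg _)
      rw [show (List.ofFn fun i : Fin (k + 1) => ((g i : Matrix (Fin n) (Fin n) (ZMod p)) - 1))
          = ((List.ofFn fun i : Fin k => ((g i.castSucc : Matrix (Fin n) (Fin n) (ZMod p)) - 1)).concat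
              ((g (Fin.last k) : Matrix (Fin n) (Fin n) (ZMod p)) - 1)) from List.ofFn_succ' _,
        List.prod_concat, mul_assoc]
      exact hrec

/-- Let `p` be a prime, `n ≥ 1`, `G` a commutative subgroup of `GL n (ZMod p)`,
`1 ≤ r ≤ p - 1`, and `M` an `n × n` matrix over `ZMod p`. If `(g - 1) ^ r * M = 0` for all
`g ∈ G`, then `(g - 1) ^ (r - 1) * (h - 1) * M = 0` for all `g, h ∈ G`; consequently
`(g₁ - 1)(g₂ - 1)⋯(g_r - 1) * M = 0` for all `g₁, …, g_r ∈ G`. -/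
theorem strong_nilpotency_lemma
    (p : ℕ) (hp : p.Prime) (n : ℕ) (hn : 1 ≤ n)
    (G : Subgroup (GL (Fin n) (ZMod p)))
    (hcomm : ∀ a ∈ G, ∀ b ∈ G, a * b = b * a)
    (r : ℕ) (hr1 : 1 ≤ r) (hr2 : r ≤ p - 1)
    (M : Matrix (Fin n) (Fin n) (ZMod p))
    (hM : ∀ g ∈ G, ((g : Matrix (Fin n) (Fin n) (ZMod p)) - 1) ^ r * M = 0) :
    (∀ g ∈ G, ∀ h ∈ G,
        ((g : Matrix (Fin n) (Fin n) (ZMod p)) - 1) ^ (r - 1) *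
          ((h : Matrix (Fin n) (Fin n) (ZMod p)) - 1) * M = 0) ∧
      (∀ g : Fin r → GL (Fin n) (ZMod p), (∀ i, g i ∈ G) →
        (List.ofFn fun i => ((g i : Matrix (Fin n) (Fin n) (ZMod p)) - 1)).prod * M = 0) := by
  constructor
  · intro g hg h hh
    exact part1_aux hp G hcomm hr1 hr2 M hM g h hg hh
  · intro g hg
    exact part2_aux hp G hcomm r hr1 hr2 M hM g hg
end

section
/- Let p be a prime and R a commutative ring of characteristic p. Let x, y ∈ R be nonzero elements such that x^i * y^{p−1−i} = 0 for every 0 ≤ i ≤ p−1. Writing (z)_n := 1 + z + z^2 + ⋯ + z^{n−1} for z ∈ R and n ≥ 0 (with (z)_0 = 0), the following are equivalent: (1) ∑_{r=1}^{p−1} (1+x)^{r·i} · (1+y)_{r·j} = 0 for all 1 ≤ i, j ≤ p−1; (2) ∑_{r=1}^{p−1} (1+x)^{r·i} · (1+y)_r = 0 for all 1 ≤ i ≤ p−1; (3) ∑_{r=1}^{p−1} (1+x)^r · (1+y)_{r·j} = 0 for all 1 ≤ j ≤ p−1; (4) x^i * y^{p−2−i} = 0 for all 0 ≤ i ≤ p−2.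 -/
open Finset Polynomial

private lemma gsv_coeff_comp {K : Type*} [CommRing K] (P : K[X]) (a : K) (d : ℕ) :
    (P.comp (C a * X)).coeff d = P.coeff d * a ^ d := by
  induction P using Polynomial.induction_on' with
  | add f g hf hg => simp [add_comp, hf, hg, add_mul]
  | monomial n c =>
      rw [monomial_comp, mul_pow, ← C_pow, ← mul_assoc, ← C_mul, coeff_C_mul_X_pow,
        coeff_monomial]
      by_cases h : d = n
      · subst h; simp
      · rw [if_neg h, if_neg (fun hh => h hh.symm), zero_mul]

private lemma gsv_sum_pow (p : ℕ) [Fact p.Prime] (d : ℕ) (hd : d < p) :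
    ∑ a : ZMod p, a ^ d = if d = p - 1 then -1 else 0 := by
  have hp2 := (Fact.out : p.Prime).two_le
  split_ifs with h
  · subst h
    have h1 : ∀ a : ZMod p, a ^ (p - 1) = 1 - (if a = 0 then 1 else 0) := by
      intro a
      by_cases ha : a = 0
      · simp [ha, zero_pow (show p - 1 ≠ 0 by omega)]
      · simp [ha, ZMod.pow_card_sub_one_eq_one ha]
    rw [Finset.sum_congr rfl fun a _ => h1 a, Finset.sum_sub_distrib,
      Finset.sum_ite_eq' Finset.univ (0 : ZMod p) (fun _ => (1 : ZMod p)),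
      if_pos (Finset.mem_univ _), Finset.sum_const, Finset.card_univ, ZMod.card,
      nsmul_eq_mul, CharP.cast_eq_zero]
    ring
  · have h2 := FiniteField.sum_pow_lt_card_sub_one (K := ZMod p) d ?_
    · simpa using h2
    · rw [ZMod.card]; omega

private lemma gsv_sum_eval (p : ℕ) [Fact p.Prime] (F : (ZMod p)[X]) (hF : F.natDegree < p) :
    ∑ a : ZMod p, F.eval a = -F.coeff (p - 1) := by
  have hp2 := (Fact.out : p.Prime).two_le
  have h1 : ∀ a : ZMod p, F.eval a = ∑ d ∈ range p, F.coeff d * a ^ d := fun a =>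
    Polynomial.eval_eq_sum_range' hF a
  rw [Finset.sum_congr rfl fun a _ => h1 a, Finset.sum_comm]
  rw [Finset.sum_eq_single (p - 1)]
  · rw [← Finset.mul_sum, gsv_sum_pow p _ (by omega), if_pos rfl]; ring
  · intro d hd hdne
    rw [← Finset.mul_sum, gsv_sum_pow p _ (Finset.mem_range.mp hd), if_neg hdne, mul_zero]
  · intro h; exact absurd (Finset.mem_range.mpr (by omega)) h

private lemma gsv_core (p : ℕ) [Fact p.Prime] (m n : ℕ) (hn : 0 < n) (h : m + n ≤ p - 1)
    (i j : ℕ) :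
    ∑ r ∈ Finset.Icc 1 (p - 1), ((r * i).descFactorial m : ZMod p) * ((r * j).descFactorial n) =
      if m + n = p - 1 then -((i : ZMod p) ^ m * (j : ZMod p) ^ n) else 0 := by
  have hp2 := (Fact.out : p.Prime).two_le
  set P := descPochhammer (ZMod p) m with hP
  set Q := descPochhammer (ZMod p) n with hQ
  set F : (ZMod p)[X] := P.comp (C (i : ZMod p) * X) * Q.comp (C (j : ZMod p) * X) with hF
  have heval : ∀ r : ℕ, F.eval (r : ZMod p)
      = ((r * i).descFactorial m : ZMod p) * ((r * j).descFactorial n) := by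
    intro r
    rw [hF, eval_mul, eval_comp, eval_comp, eval_mul, eval_C, eval_X, eval_mul, eval_C, eval_X]
    rw [show (i : ZMod p) * r = ((r * i : ℕ) : ZMod p) by push_cast; ring,
      show (j : ZMod p) * r = ((r * j : ℕ) : ZMod p) by push_cast; ring]
    rw [descPochhammer_eval_eq_descFactorial, descPochhammer_eval_eq_descFactorial]
  have hPd : P.natDegree = m := descPochhammer_natDegree (ZMod p) m
  have hQd : Q.natDegree = n := descPochhammer_natDegree (ZMod p) n
  have hcP : ∀ d, m < d → (P.comp (C (i : ZMod p) * X)).coeff d = 0 := by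
    intro d hd
    rw [gsv_coeff_comp, coeff_eq_zero_of_natDegree_lt (by omega), zero_mul]
  have hcQ : ∀ d, n < d → (Q.comp (C (j : ZMod p) * X)).coeff d = 0 := by
    intro d hd
    rw [gsv_coeff_comp, coeff_eq_zero_of_natDegree_lt (by omega), zero_mul]
  have hFd : F.natDegree < p := by
    have h1 : F.natDegree ≤ (P.comp (C (i : ZMod p) * X)).natDegree
        + (Q.comp (C (j : ZMod p) * X)).natDegree := natDegree_mul_le
    have h2 : (P.comp (C (i : ZMod p) * X)).natDegree ≤ m :=
      natDegree_le_iff_coeff_eq_zero.mpr fun d hd => hcP d hd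
    have h3 : (Q.comp (C (j : ZMod p) * X)).natDegree ≤ n :=
      natDegree_le_iff_coeff_eq_zero.mpr fun d hd => hcQ d hd
    omega
  have hcoeff : F.coeff (p - 1)
      = if m + n = p - 1 then (i : ZMod p) ^ m * (j : ZMod p) ^ n else 0 := by
    rw [hF, coeff_mul]
    by_cases hmn : m + n = p - 1
    · rw [if_pos hmn, Finset.sum_eq_single (m, n)]
      · have hm1 : P.coeff m = 1 := by
          rw [← hPd]; exact (monic_descPochhammer (ZMod p) m).coeff_natDegree
        have hn1 : Q.coeff n = 1 := by
          rw [← hQd]; exact (monic_descPochhammer (ZMod p) n).coeff_natDegree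
        show (P.comp (C (i : ZMod p) * X)).coeff m * (Q.comp (C (j : ZMod p) * X)).coeff n = _
        rw [gsv_coeff_comp, gsv_coeff_comp, hm1, hn1]; ring
      · rintro ⟨d₁, d₂⟩ hmem hne
        rw [Finset.HasAntidiagonal.mem_antidiagonal] at hmem
        rcases Nat.lt_or_ge m d₁ with h1 | h1
        · show (P.comp _).coeff d₁ * (Q.comp _).coeff d₂ = 0
          rw [hcP d₁ h1, zero_mul]
        · have hd2 : n < d₂ := by
            rcases Nat.lt_or_ge n d₂ with h2 | h2
            · exact h2
            · exfalso; apply hne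
              have hdd : d₁ = m ∧ d₂ = n := by omega
              simp [hdd.1, hdd.2]
          show (P.comp _).coeff d₁ * (Q.comp _).coeff d₂ = 0
          rw [hcQ d₂ hd2, mul_zero]
      · intro hco; exact absurd (Finset.HasAntidiagonal.mem_antidiagonal.mpr (by omega)) hco
    · rw [if_neg hmn]
      apply Finset.sum_eq_zero
      rintro ⟨d₁, d₂⟩ hmem
      rw [Finset.HasAntidiagonal.mem_antidiagonal] at hmem
      rcases Nat.lt_or_ge m d₁ with h1 | h1
      · show (P.comp _).coeff d₁ * (Q.comp _).coeff d₂ = 0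
        rw [hcP d₁ h1, zero_mul]
      · show (P.comp _).coeff d₁ * (Q.comp _).coeff d₂ = 0
        rw [hcQ d₂ (by omega), mul_zero]
  -- assemble
  have hins : insert 0 (Finset.Icc 1 (p - 1)) = Finset.range p := by
    ext a; simp only [Finset.mem_insert, Finset.mem_Icc, Finset.mem_range]; omega
  have h0 : F.eval ((0 : ℕ) : ZMod p) = 0 := by
    rw [heval 0]
    simp [Nat.descFactorial_eq_zero_iff_lt.mpr hn]
  calc ∑ r ∈ Finset.Icc 1 (p - 1),
        ((r * i).descFactorial m : ZMod p) * ((r * j).descFactorial n)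
      = ∑ r ∈ Finset.Icc 1 (p - 1), F.eval (r : ZMod p) :=
        Finset.sum_congr rfl fun r _ => (heval r).symm
    _ = ∑ r ∈ Finset.range p, F.eval (r : ZMod p) := by
        rw [← hins, Finset.sum_insert (by simp), h0, zero_add]
    _ = ∑ a : ZMod p, F.eval a := by
        exact Finset.sum_nbij' (fun r => (r : ZMod p)) (fun a => a.val)
          (fun r _ => Finset.mem_univ _)
          (fun a _ => Finset.mem_range.mpr (ZMod.val_lt a))
          (fun r hr => ZMod.val_cast_of_lt (Finset.mem_range.mp hr))
          (fun a _ => ZMod.natCast_rightInverse a)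
          (fun r _ => rfl)
    _ = -F.coeff (p - 1) := gsv_sum_eval p F hFd
    _ = _ := by rw [hcoeff]; split_ifs <;> simp

private lemma gsv_core' (p : ℕ) [Fact p.Prime] (m n : ℕ) (hn : 0 < n) (h : m + n ≤ p - 1)
    (i j : ℕ) :
    ∑ r ∈ Finset.Icc 1 (p - 1), (((r * i).choose m * (r * j).choose n : ℕ) : ZMod p) =
      if m + n = p - 1 then
        -((i : ZMod p) ^ m * (j : ZMod p) ^ n) * ((m.factorial * n.factorial : ℕ) : ZMod p)⁻¹
      else 0 := by
  have hp : p.Prime := Fact.out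
  have hp2 := hp.two_le
  have hu : ((m.factorial * n.factorial : ℕ) : ZMod p) ≠ 0 := by
    rw [Ne, ZMod.natCast_eq_zero_iff]
    intro hd
    rcases (Nat.Prime.dvd_mul hp).mp hd with hd | hd
    · exact absurd ((Nat.Prime.dvd_factorial hp).mp hd) (by omega)
    · exact absurd ((Nat.Prime.dvd_factorial hp).mp hd) (by omega)
  apply mul_left_cancel₀ hu
  rw [Finset.mul_sum]
  have hterm : ∀ r : ℕ, ((m.factorial * n.factorial : ℕ) : ZMod p) *
      (((r * i).choose m * (r * j).choose n : ℕ) : ZMod p)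
      = ((r * i).descFactorial m : ZMod p) * ((r * j).descFactorial n) := by
    intro r
    rw [Nat.descFactorial_eq_factorial_mul_choose, Nat.descFactorial_eq_factorial_mul_choose]
    push_cast; ring
  rw [Finset.sum_congr rfl fun r _ => hterm r, gsv_core p m n hn h i j]
  split_ifs with hmn
  · rw [mul_left_comm, mul_inv_cancel₀ hu, mul_one]
  · rw [mul_zero]

private lemma gsv_hockey (n l : ℕ) : ∑ k ∈ Finset.range n, Nat.choose k l = n.choose (l + 1) := by
  induction n with
  | zero => simp
  | succ n ih => rw [Finset.sum_range_succ, ih, Nat.choose_succ_succ']; omega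

private lemma gsv_pow_expand {R : Type*} [CommRing R] (q : ℕ) (x : R)
    (hx0 : ∀ m, q ≤ m → x ^ m = 0) (n : ℕ) :
    (1 + x) ^ n = ∑ m ∈ Finset.range q, (n.choose m : R) * x ^ m := by
  have h1 : (1 + x) ^ n = ∑ m ∈ Finset.range (n + 1), (n.choose m : R) * x ^ m := by
    rw [add_comm, add_pow]
    exact Finset.sum_congr rfl fun k _ => by rw [one_pow, mul_one, mul_comm]
  have h2 := Finset.sum_subset (f := fun m => (n.choose m : R) * x ^ m)
    (Finset.range_subset_range.mpr (le_max_left (n + 1) q)) (fun k _ hk => by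
      simp only [Finset.mem_range, not_lt] at hk
      show (n.choose k : R) * x ^ k = 0
      rw [Nat.choose_eq_zero_of_lt (by omega), Nat.cast_zero, zero_mul])
  have h3 := Finset.sum_subset (f := fun m => (n.choose m : R) * x ^ m)
    (Finset.range_subset_range.mpr (le_max_right (n + 1) q)) (fun k _ hk => by
      simp only [Finset.mem_range, not_lt] at hk
      show (n.choose k : R) * x ^ k = 0
      rw [hx0 k (by omega), mul_zero])
  rw [h1, h2, ← h3]

private lemma gsv_geom_expand {R : Type*} [CommRing R] (q : ℕ) (y : R)
    (hy0 : ∀ m, q ≤ m → y ^ m = 0) (n : ℕ) :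
    ∑ k ∈ Finset.range n, (1 + y) ^ k
      = ∑ l ∈ Finset.range q, (n.choose (l + 1) : R) * y ^ l := by
  rw [Finset.sum_congr rfl fun k _ => gsv_pow_expand q y hy0 k, Finset.sum_comm]
  refine Finset.sum_congr rfl fun l _ => ?_
  rw [← Finset.sum_mul, ← Nat.cast_sum, gsv_hockey]

private lemma gsv_vand (p : ℕ) [Fact p.Prime] {R : Type*} [CommRing R] (φ : ZMod p →+* R)
    (c : ℕ → R) (e : ℕ → ZMod p) (he : ∀ m ∈ Finset.range (p - 1), e m ≠ 0) (g h : ℕ → ℕ)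
    (hgh : ∀ m ∈ Finset.range (p - 1), ∀ n ∈ Finset.range (p - 1),
      ((p - 1) ∣ g m + h n ↔ m = n))
    (hyp : ∀ a : (ZMod p)ˣ,
      ∑ m ∈ Finset.range (p - 1), φ (e m * (a : ZMod p) ^ (g m)) * c m = 0) :
    ∀ n ∈ Finset.range (p - 1), c n = 0 := by
  intro n hn
  classical
  have h0 : ∑ a : (ZMod p)ˣ, φ ((a : ZMod p) ^ (h n)) *
      (∑ m ∈ Finset.range (p - 1), φ (e m * (a : ZMod p) ^ (g m)) * c m) = 0 := by
    exact Finset.sum_eq_zero fun a _ => by rw [hyp a, mul_zero]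
  have h1 : ∀ a : (ZMod p)ˣ, φ ((a : ZMod p) ^ (h n)) *
      (∑ m ∈ Finset.range (p - 1), φ (e m * (a : ZMod p) ^ (g m)) * c m)
      = ∑ m ∈ Finset.range (p - 1), φ (e m) * φ ((a : ZMod p) ^ (g m + h n)) * c m := by
    intro a
    rw [Finset.mul_sum]
    refine Finset.sum_congr rfl fun m _ => ?_
    rw [map_mul, pow_add, map_mul]
    ring
  rw [Finset.sum_congr rfl fun a _ => h1 a, Finset.sum_comm] at h0
  have h2 : ∀ m ∈ Finset.range (p - 1),
      (∑ a : (ZMod p)ˣ, φ (e m) * φ ((a : ZMod p) ^ (g m + h n)) * c m)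
      = if m = n then -φ (e m) * c m else 0 := by
    intro m hm
    have hs : (∑ a : (ZMod p)ˣ, (a : ZMod p) ^ (g m + h n))
        = if (p - 1) ∣ (g m + h n) then -1 else 0 := by
      have hsu := FiniteField.sum_pow_units (ZMod p) (g m + h n)
      rw [ZMod.card] at hsu
      simpa using hsu
    calc ∑ a : (ZMod p)ˣ, φ (e m) * φ ((a : ZMod p) ^ (g m + h n)) * c m
        = φ (e m) * φ (∑ a : (ZMod p)ˣ, (a : ZMod p) ^ (g m + h n)) * c m := by
          rw [map_sum, Finset.mul_sum, Finset.sum_mul]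
      _ = if m = n then -φ (e m) * c m else 0 := by
          rw [hs]
          by_cases hmn : m = n
          · rw [if_pos ((hgh m hm n hn).mpr hmn), if_pos hmn, map_neg, map_one]; ring
          · rw [if_neg (fun hd => hmn ((hgh m hm n hn).mp hd)), if_neg hmn, map_zero,
              mul_zero, zero_mul]
  rw [Finset.sum_congr rfl h2, Finset.sum_ite_eq' (Finset.range (p - 1)) n, if_pos hn] at h0
  have hune : IsUnit (φ (e n)) := (Ne.isUnit (he n hn)).map φ
  have h3 : φ (e n) * c n = 0 := by
    rw [neg_mul] at h0
    exact neg_eq_zero.mp h0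
  exact (hune.mul_right_eq_zero).mp h3

/-- Let `p` be a prime and `R` a commutative ring of characteristic `p`. Let `x, y ∈ R` be
nonzero elements with `x ^ i * y ^ (p - 1 - i) = 0` for all `0 ≤ i ≤ p - 1`. Writing
`(z)_n := 1 + z + ⋯ + z^(n-1)`, the following are equivalent:
(1) `∑_{r=1}^{p-1} (1+x)^(r·i) · (1+y)_(r·j) = 0` for all `1 ≤ i, j ≤ p - 1`;
(2) `∑_{r=1}^{p-1} (1+x)^(r·i) · (1+y)_r = 0` for all `1 ≤ i ≤ p - 1`;
(3) `∑_{r=1}^{p-1} (1+x)^r · (1+y)_(r·j) = 0` for all `1 ≤ j ≤ p - 1`;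
(4) `x ^ i * y ^ (p - 2 - i) = 0` for all `0 ≤ i ≤ p - 2`. -/
theorem geometric_sum_vanishing_tfae
    (p : ℕ) (hp : p.Prime) (R : Type*) [CommRing R] [CharP R p]
    (x y : R) (hx : x ≠ 0) (hy : y ≠ 0)
    (hxy : ∀ i ≤ p - 1, x ^ i * y ^ (p - 1 - i) = 0) :
    List.TFAE
      [∀ i ∈ Finset.Icc 1 (p - 1), ∀ j ∈ Finset.Icc 1 (p - 1),
         ∑ r ∈ Finset.Icc 1 (p - 1),
           (1 + x) ^ (r * i) * ∑ k ∈ Finset.range (r * j), (1 + y) ^ k = 0,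
       ∀ i ∈ Finset.Icc 1 (p - 1),
         ∑ r ∈ Finset.Icc 1 (p - 1),
           (1 + x) ^ (r * i) * ∑ k ∈ Finset.range r, (1 + y) ^ k = 0,
       ∀ j ∈ Finset.Icc 1 (p - 1),
         ∑ r ∈ Finset.Icc 1 (p - 1),
           (1 + x) ^ r * ∑ k ∈ Finset.range (r * j), (1 + y) ^ k = 0,
       ∀ i ≤ p - 2, x ^ i * y ^ (p - 2 - i) = 0] := by
  haveI : Fact p.Prime := ⟨hp⟩
  have hp2 := hp.two_le
  set φ : ZMod p →+* R := ZMod.castHom (dvd_refl p) R with hφ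
  have hone : (1 : ℕ) ∈ Finset.Icc 1 (p - 1) := Finset.mem_Icc.mpr ⟨le_rfl, by omega⟩
  -- basic vanishing facts
  have hx0 : ∀ m, p - 1 ≤ m → x ^ m = 0 := by
    intro m hm
    have h1 : x ^ (p - 1) = 0 := by simpa using hxy (p - 1) le_rfl
    calc x ^ m = x ^ (p - 1) * x ^ (m - (p - 1)) := by
          rw [← pow_add]; congr 1; omega
      _ = 0 := by rw [h1, zero_mul]
  have hy0 : ∀ m, p - 1 ≤ m → y ^ m = 0 := by
    intro m hm
    have h1 : y ^ (p - 1) = 0 := by simpa using hxy 0 (by omega)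
    calc y ^ m = y ^ (p - 1) * y ^ (m - (p - 1)) := by
          rw [← pow_add]; congr 1; omega
      _ = 0 := by rw [h1, zero_mul]
  have hxy0 : ∀ m l, p - 1 ≤ m + l → x ^ m * y ^ l = 0 := by
    intro m l hml
    by_cases hm : p - 1 ≤ m
    · rw [hx0 m hm, zero_mul]
    · push_neg at hm
      have h1 : x ^ m * y ^ (p - 1 - m) = 0 := hxy m (by omega)
      calc x ^ m * y ^ l = x ^ m * y ^ (p - 1 - m) * y ^ (l - (p - 1 - m)) := by
            rw [mul_assoc, ← pow_add]; congr 2; omega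
        _ = 0 := by rw [h1, zero_mul]
  -- nonvanishing of the coefficient units
  have he : ∀ m ∈ Finset.range (p - 1),
      (fun m => -(((m.factorial * (p - 1 - m).factorial : ℕ) : ZMod p))⁻¹) m ≠ 0 := by
    intro m hm
    rw [Finset.mem_range] at hm
    simp only [ne_eq, neg_eq_zero, inv_eq_zero]
    rw [ZMod.natCast_eq_zero_iff]
    intro hd
    rcases (Nat.Prime.dvd_mul hp).mp hd with hd | hd
    · exact absurd ((Nat.Prime.dvd_factorial hp).mp hd) (by omega)
    · exact absurd ((Nat.Prime.dvd_factorial hp).mp hd) (by omega)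
  -- the key formula
  have key : ∀ i ∈ Finset.Icc 1 (p - 1), ∀ j ∈ Finset.Icc 1 (p - 1),
      (∑ r ∈ Finset.Icc 1 (p - 1),
        (1 + x) ^ (r * i) * ∑ k ∈ Finset.range (r * j), (1 + y) ^ k)
      = ∑ m ∈ Finset.range (p - 1),
          φ (-(((m.factorial * (p - 1 - m).factorial : ℕ) : ZMod p))⁻¹
              * (i : ZMod p) ^ m * (j : ZMod p) ^ (p - 1 - m))
            * (x ^ m * y ^ (p - 2 - m)) := by
    intro i hi j hj
    have step1 : ∀ r : ℕ, (1 + x) ^ (r * i) * ∑ k ∈ Finset.range (r * j), (1 + y) ^ k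
        = ∑ m ∈ Finset.range (p - 1), ∑ l ∈ Finset.range (p - 1),
            (((r * i).choose m * (r * j).choose (l + 1) : ℕ) : R) * (x ^ m * y ^ l) := by
      intro r
      rw [gsv_pow_expand (p - 1) x hx0, gsv_geom_expand (p - 1) y hy0, Finset.sum_mul_sum]
      refine Finset.sum_congr rfl fun m _ => Finset.sum_congr rfl fun l _ => ?_
      push_cast; ring
    rw [Finset.sum_congr rfl fun r _ => step1 r, Finset.sum_comm]
    refine Finset.sum_congr rfl fun m hm => ?_
    rw [Finset.mem_range] at hm
    rw [Finset.sum_comm]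
    have hsum : ∀ l, (∑ r ∈ Finset.Icc 1 (p - 1),
        (((r * i).choose m * (r * j).choose (l + 1) : ℕ) : R) * (x ^ m * y ^ l))
        = φ (∑ r ∈ Finset.Icc 1 (p - 1),
            (((r * i).choose m * (r * j).choose (l + 1) : ℕ) : ZMod p)) * (x ^ m * y ^ l) := by
      intro l
      rw [← Finset.sum_mul, map_sum]
      congr 1
      exact Finset.sum_congr rfl fun r _ => (map_natCast φ _).symm
    rw [Finset.sum_congr rfl fun l _ => hsum l]
    rw [Finset.sum_eq_single (p - 2 - m)]
    · rw [gsv_core' p m (p - 2 - m + 1) (by omega) (by omega) i j,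
        if_pos (by omega), show p - 2 - m + 1 = p - 1 - m by omega]
      congr 2
      ring
    · intro l hl hlne
      rw [Finset.mem_range] at hl
      by_cases hml : p - 1 ≤ m + l
      · rw [hxy0 m l hml, mul_zero]
      · rw [gsv_core' p m (l + 1) (by omega) (by omega) i j, if_neg (by omega), map_zero,
          zero_mul]
    · intro hcon
      exact absurd (Finset.mem_range.mpr (by omega)) hcon
  tfae_have 1 → 2 := by
    intro H1 i hi
    have h := H1 i hi 1 hone
    simpa using h
  tfae_have 1 → 3 := by
    intro H1 j hj
    have h := H1 1 hone j hj
    simpa using h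
  tfae_have 4 → 1 := by
    intro H4 i hi j hj
    rw [key i hi j hj]
    refine Finset.sum_eq_zero fun m hm => ?_
    rw [Finset.mem_range] at hm
    rw [H4 m (by omega), mul_zero]
  tfae_have 2 → 4 := by
    intro H2 n hn
    have hn' : n ∈ Finset.range (p - 1) := Finset.mem_range.mpr (by omega)
    refine gsv_vand p φ (fun m => x ^ m * y ^ (p - 2 - m))
      (fun m => -(((m.factorial * (p - 1 - m).factorial : ℕ) : ZMod p))⁻¹) he
      (fun m => m) (fun n => p - 1 - n) ?_ ?_ n hn'
    · intro m hm n' hn''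
      rw [Finset.mem_range] at hm hn''
      show p - 1 ∣ m + (p - 1 - n') ↔ m = n'
      constructor
      · intro hd
        have := Nat.eq_of_dvd_of_lt_two_mul (by omega) hd (by omega)
        omega
      · intro hmn
        subst hmn
        have hval : m + (p - 1 - m) = p - 1 := by omega
        rw [hval]
    · intro a
      have ha0 : (a : ZMod p) ≠ 0 := a.ne_zero
      have hv1 : 0 < (a : ZMod p).val := ZMod.val_pos.mpr ha0
      have hvlt : (a : ZMod p).val < p := ZMod.val_lt _
      have hmem : (a : ZMod p).val ∈ Finset.Icc 1 (p - 1) := Finset.mem_Icc.mpr ⟨hv1, by omega⟩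
      have hcast : (((a : ZMod p).val : ℕ) : ZMod p) = (a : ZMod p) :=
        ZMod.natCast_rightInverse (a : ZMod p)
      have h1 : (∑ r ∈ Finset.Icc 1 (p - 1),
          (1 + x) ^ (r * (a : ZMod p).val) * ∑ k ∈ Finset.range (r * 1), (1 + y) ^ k) = 0 := by
        simpa using H2 ((a : ZMod p).val) hmem
      rw [key ((a : ZMod p).val) hmem 1 hone] at h1
      simp only [Nat.cast_one, one_pow, mul_one, hcast] at h1
      exact h1
  tfae_have 3 → 4 := by
    intro H3 n hn
    have hn' : n ∈ Finset.range (p - 1) := Finset.mem_range.mpr (by omega)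
    refine gsv_vand p φ (fun m => x ^ m * y ^ (p - 2 - m))
      (fun m => -(((m.factorial * (p - 1 - m).factorial : ℕ) : ZMod p))⁻¹) he
      (fun m => p - 1 - m) (fun n => n) ?_ ?_ n hn'
    · intro m hm n' hn''
      rw [Finset.mem_range] at hm hn''
      show p - 1 ∣ (p - 1 - m) + n' ↔ m = n'
      constructor
      · intro hd
        have := Nat.eq_of_dvd_of_lt_two_mul (by omega) hd (by omega)
        omega
      · intro hmn
        subst hmn
        have hval : p - 1 - m + m = p - 1 := by omega
        rw [hval]
    · intro a
      have ha0 : (a : ZMod p) ≠ 0 := a.ne_zero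
      have hv1 : 0 < (a : ZMod p).val := ZMod.val_pos.mpr ha0
      have hvlt : (a : ZMod p).val < p := ZMod.val_lt _
      have hmem : (a : ZMod p).val ∈ Finset.Icc 1 (p - 1) := Finset.mem_Icc.mpr ⟨hv1, by omega⟩
      have hcast : (((a : ZMod p).val : ℕ) : ZMod p) = (a : ZMod p) :=
        ZMod.natCast_rightInverse (a : ZMod p)
      have h1 : (∑ r ∈ Finset.Icc 1 (p - 1),
          (1 + x) ^ (r * 1) * ∑ k ∈ Finset.range (r * (a : ZMod p).val), (1 + y) ^ k) = 0 := by
        simpa using H3 ((a : ZMod p).val) hmem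
      rw [key 1 hone ((a : ZMod p).val) hmem] at h1
      simp only [Nat.cast_one, one_pow, mul_one, hcast] at h1
      exact h1
  tfae_finish
end

section
/- Let p be a prime and let G = A ⋊_{ρ,φ} H be the realizing group of a datum (H, A, ρ, φ). Then every element g of G satisfies g^p = 1 if and only if all of the following hold: (i) h^p = 1 for every h ∈ H; (ii) for every h ∈ H and a ∈ A, ∑_{i=0}^{p−1} (h^i) ▹ a = 0; (iii) for every h ∈ H, ∑_{i=1}^{p−1} φ (h^i) h = 0 (i.e., φ h h + φ (h^2) h + ⋯ + φ (h^{p−1}) h = 0). -/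
/-- Let `p` be a prime and `G = A ⋊_{ρ,φ} H` the realizing group of a datum `(H, A, ρ, φ)`,
modeled by a group structure on `A × H` with `(a,h) * (b,k) = (a + h ▹ b + φ h k, h * k)` and
identity `(0,1)`. Then every `g ∈ G` satisfies `g ^ p = 1` iff: (i) `h ^ p = 1` for all `h`;
(ii) `∑_{i=0}^{p-1} (h^i) ▹ a = 0` for all `h, a`; (iii) `∑_{i=1}^{p-1} φ (h^i) h = 0`
for all `h`. -/
theorem realizing_group_exponent_p_iff
    (p : ℕ) (hp : p.Prime)
    (H : Type*) [Group H] (A : Type*) [AddCommGroup A]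
    (ρ : H →* Multiplicative (AddAut A)) (φ : H → H → A)
    (hφ1 : ∀ h : H, φ 1 h = 0) (hφ2 : ∀ h : H, φ h 1 = 0)
    [grp : Group (A × H)]
    (hmul : ∀ (a b : A) (h k : H), (a, h) * (b, k) = (a + (ρ h).toAdd b + φ h k, h * k))
    (hone : (1 : A × H) = (0, 1)) :
    (∀ g : A × H, g ^ p = 1) ↔
      ((∀ h : H, h ^ p = 1) ∧
        (∀ (h : H) (a : A), ∑ i ∈ Finset.range p, (ρ (h ^ i)).toAdd a = 0) ∧
        (∀ h : H, ∑ i ∈ Finset.Icc 1 (p - 1), φ (h ^ i) h = 0)) := by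
  have key : ∀ (a : A) (h : H) (n : ℕ), (a, h) ^ n =
      (∑ i ∈ Finset.range n, (ρ (h ^ i)).toAdd a + ∑ i ∈ Finset.range n, φ (h ^ i) h, h ^ n) := by
    intro a h n
    induction n with
    | zero => simp [hone]
    | succ n ih =>
      rw [pow_succ, ih, hmul, pow_succ]
      congr 1
      rw [Finset.sum_range_succ, Finset.sum_range_succ]
      abel
  have hIcc : ∀ h : H, ∑ i ∈ Finset.range p, φ (h ^ i) h =
      ∑ i ∈ Finset.Icc 1 (p - 1), φ (h ^ i) h := by
    intro h
    have e : Finset.Ico (0 + 1) p = Finset.Icc 1 (p - 1) := by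
      rw [← Finset.Ico_add_one_right_eq_Icc, Nat.sub_add_cancel hp.one_le, zero_add]
    rw [Finset.range_eq_Ico, Finset.sum_eq_sum_Ico_succ_bot hp.pos, pow_zero, hφ1, zero_add, e]
  constructor
  · intro hg
    have h1 : ∀ h : H, h ^ p = 1 ∧ ∑ i ∈ Finset.Icc 1 (p - 1), φ (h ^ i) h = 0 := by
      intro h
      have := hg (0, h)
      rw [key, hone, Prod.mk.injEq] at this
      obtain ⟨h1, h2⟩ := this
      simp only [map_zero, Finset.sum_const_zero, zero_add] at h1
      exact ⟨h2, (hIcc h) ▸ h1⟩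
    refine ⟨fun h => (h1 h).1, ?_, fun h => (h1 h).2⟩
    intro h a
    have := hg (a, h)
    rw [key, hone, Prod.mk.injEq] at this
    have h2 := (h1 h).2
    rw [← hIcc] at h2
    rw [h2, add_zero] at this
    exact this.1
  · rintro ⟨h1, h2, h3⟩ ⟨a, h⟩
    rw [key, hone, Prod.mk.injEq]
    refine ⟨?_, h1 h⟩
    rw [h2 h a, hIcc, h3 h, add_zero]
end

section
/- Let H be a commutative group and G = A ⋊_{ρ,φ} H the realizing group of a datum (H, A, ρ, φ). Let S be the additive subgroup of A generated by the set {k ▹ b − b : k ∈ H, b ∈ A} ∪ {φ k h − φ h k : h, k ∈ H}. Then the commutator subgroup of G is exactly {(a, 1) : a ∈ S}; that is, an element (a,h) of G lies in the commutator subgroup if and only if h = 1 and a ∈ S. -/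
/-- Let `H` be a commutative group and `G = A ⋊_{ρ,φ} H` the realizing group of a datum
`(H, A, ρ, φ)`, modeled by a group structure on `A × H` with
`(a,h) * (b,k) = (a + h ▹ b + φ h k, h * k)` and identity `(0,1)`. Let `S` be the additive
subgroup of `A` generated by `{k ▹ b - b}` and `{φ k h - φ h k}`. Then `(a, h)` lies in the
commutator subgroup of `G` iff `h = 1` and `a ∈ S`. -/
theorem realizing_group_commutator_subgroup
    (H : Type*) [CommGroup H] (A : Type*) [AddCommGroup A]
    (ρ : H →* Multiplicative (AddAut A)) (φ : H → H → A)
    (hφ1 : ∀ h : H, φ 1 h = 0) (hφ2 : ∀ h : H, φ h 1 = 0)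
    [grp : Group (A × H)]
    (hmul : ∀ (a b : A) (h k : H), (a, h) * (b, k) = (a + Multiplicative.toAdd (ρ h) b + φ h k, h * k))
    (hone : (1 : A × H) = (0, 1)) :
    ∀ (a : A) (h : H),
      (a, h) ∈ commutator (A × H) ↔
        (h = 1 ∧ a ∈ AddSubgroup.closure
          ({x : A | ∃ (k : H) (b : A), x = Multiplicative.toAdd (ρ k) b - b} ∪
            {x : A | ∃ h' k : H, x = φ k h' - φ h' k})) := by
  have hact : ∀ (g : H) (d : A), Multiplicative.toAdd (ρ g) (Multiplicative.toAdd (ρ g⁻¹) d) = d := by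
    intro g d
    rw [← AddAut.add_apply, ← toAdd_mul, ← map_mul, mul_inv_cancel, map_one, toAdd_one,
      AddAut.zero_apply]
  have hinv : ∀ (c : A) (g : H), ((c, g) : A × H)⁻¹ = (-(Multiplicative.toAdd (ρ g⁻¹) c) - φ g⁻¹ g, g⁻¹) := by
    intro c g
    refine inv_eq_of_mul_eq_one_left ?_
    rw [hmul, hone, Prod.mk.injEq]
    exact ⟨by abel, inv_mul_cancel g⟩
  have hkey : ∀ g : H, Multiplicative.toAdd (ρ g) (φ g⁻¹ g) = φ g g⁻¹ := by
    intro g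
    have h1 := mul_inv_cancel (((0 : A), g) : A × H)
    rw [hinv, hmul, hone, Prod.mk.injEq] at h1
    have h2 := h1.1
    simp only [map_zero, neg_zero, zero_sub, map_neg, zero_add] at h2
    exact neg_add_eq_zero.mp h2
  have hdiff : ∀ (c d : A) (g : H), ((c, g) : A × H) * (d, g)⁻¹ = (c - d, (1 : H)) := by
    intro c d g
    rw [hinv, hmul, Prod.mk.injEq]
    refine ⟨?_, mul_inv_cancel g⟩
    rw [map_sub, map_neg, hact, hkey]
    abel
  open scoped commutatorElement in
  have hcomm : ∀ (a b : A) (h k : H),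
      ⁅((a, h) : A × H), (b, k)⁆ = (a + Multiplicative.toAdd (ρ h) b + φ h k - (b + Multiplicative.toAdd (ρ k) a + φ k h), (1 : H)) := by
    intro a b h k
    have e : ⁅((a, h) : A × H), (b, k)⁆ = ((a, h) * (b, k)) * ((b, k) * (a, h))⁻¹ := by
      rw [commutatorElement_def, mul_inv_rev, mul_assoc]
    rw [e, hmul b a k h, mul_comm k h, hmul a b h k, hdiff]
  intro a h
  constructor
  · intro hmem
    let N : Subgroup (A × H) :=
      { carrier := {p : A × H | p.2 = 1 ∧ p.1 ∈ AddSubgroup.closure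
          ({x : A | ∃ (k : H) (b : A), x = Multiplicative.toAdd (ρ k) b - b} ∪
            {x : A | ∃ h' k : H, x = φ k h' - φ h' k})}
        one_mem' := by
          rw [Set.mem_setOf_eq, hone]
          exact ⟨rfl, zero_mem _⟩
        mul_mem' := by
          rintro ⟨pa, ph⟩ ⟨qa, qh⟩ ⟨hp2, hp1⟩ ⟨hq2, hq1⟩
          simp only [Set.mem_setOf_eq] at hp2 hq2 ⊢
          subst hp2; subst hq2
          rw [hmul]
          refine ⟨by simp, ?_⟩
          have e : pa + Multiplicative.toAdd (ρ 1) qa + φ 1 1 = pa + qa := by simp [hφ1]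
          rw [e]
          exact add_mem hp1 hq1
        inv_mem' := by
          rintro ⟨pa, ph⟩ ⟨hp2, hp1⟩
          simp only [Set.mem_setOf_eq] at hp2 ⊢
          subst hp2
          rw [hinv]
          refine ⟨by simp, ?_⟩
          have e : -(Multiplicative.toAdd (ρ 1⁻¹) pa) - φ 1⁻¹ 1 = -pa := by simp [hφ2]
          rw [e]
          exact neg_mem hp1 }
    have hle : commutator (A × H) ≤ N := by
      rw [commutator_def, Subgroup.commutator_le]
      rintro ⟨xa, xh⟩ - ⟨ya, yh⟩ -
      rw [hcomm]
      refine ⟨rfl, ?_⟩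
      have e : xa + Multiplicative.toAdd (ρ xh) ya + φ xh yh - (ya + Multiplicative.toAdd (ρ yh) xa + φ yh xh)
          = (Multiplicative.toAdd (ρ xh) ya - ya) - (Multiplicative.toAdd (ρ yh) xa - xa) + (φ xh yh - φ yh xh) := by abel
      rw [e]
      exact add_mem (sub_mem (AddSubgroup.subset_closure (Or.inl ⟨xh, ya, rfl⟩))
        (AddSubgroup.subset_closure (Or.inl ⟨yh, xa, rfl⟩)))
        (AddSubgroup.subset_closure (Or.inr ⟨yh, xh, rfl⟩))
    exact hle hmem
  · rintro ⟨rfl, hmem⟩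
    have key : ∀ x ∈ AddSubgroup.closure
        ({x : A | ∃ (k : H) (b : A), x = Multiplicative.toAdd (ρ k) b - b} ∪
          {x : A | ∃ h' k : H, x = φ k h' - φ h' k}),
        ((x, 1) : A × H) ∈ commutator (A × H) := by
      intro x hx
      induction hx using AddSubgroup.closure_induction with
      | mem y hy =>
        rcases hy with ⟨k, b, rfl⟩ | ⟨h', k, rfl⟩
        · have hc := Subgroup.commutator_mem_commutator
            (Subgroup.mem_top (((0 : A), k) : A × H))
            (Subgroup.mem_top (((b : A), (1 : H)) : A × H))
          rw [hcomm] at hc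
          have e : (0 : A) + Multiplicative.toAdd (ρ k) b + φ k 1 - (b + Multiplicative.toAdd (ρ 1) 0 + φ 1 k) = Multiplicative.toAdd (ρ k) b - b := by
            simp [hφ1, hφ2]
          rw [e] at hc
          rw [commutator_def]
          exact hc
        · have hc := Subgroup.commutator_mem_commutator
            (Subgroup.mem_top (((0 : A), k) : A × H))
            (Subgroup.mem_top (((0 : A), h') : A × H))
          rw [hcomm] at hc
          have e : (0 : A) + Multiplicative.toAdd (ρ k) 0 + φ k h' - (0 + ρ h' 0 + φ h' k) = φ k h' - φ h' k := by
            simp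
          rw [e] at hc
          rw [commutator_def]
          exact hc
      | zero =>
        rw [← hone]
        exact one_mem _
      | add y z hy hz py pz =>
        have hm := mul_mem py pz
        rw [hmul] at hm
        have e : y + Multiplicative.toAdd (ρ 1) z + φ 1 1 = y + z := by simp [hφ1]
        rw [e, one_mul] at hm
        exact hm
      | neg y hy py =>
        have hm := inv_mem py
        rw [hinv] at hm
        have e : -(Multiplicative.toAdd (ρ 1⁻¹) y) - φ 1⁻¹ 1 = -y := by simp [hφ2]
        rw [e, inv_one] at hm
        exact hm
    exact key a hmem
end

section
/- Let H be a commutative group and G = A ⋊_{ρ,φ} H the realizing group of a datum (H, A, ρ, φ). Then the center of G is exactly the set of pairs (a, k) ∈ A × H such that k ▹ b = b for every b ∈ A, and φ k h − φ h k = h ▹ a − a for every h ∈ H. -/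
/-- Let `H` be a commutative group and `G = A ⋊_{ρ,φ} H` the realizing group of a datum
`(H, A, ρ, φ)`, modeled by a group structure on `A × H` with
`(a,h) * (b,k) = (a + h ▹ b + φ h k, h * k)` and identity `(0,1)`. Then the center of `G`
consists exactly of the pairs `(a, k)` with `k ▹ b = b` for every `b ∈ A` and
`φ k h - φ h k = h ▹ a - a` for every `h ∈ H`. -/
theorem realizing_group_center
    (H : Type*) [CommGroup H] (A : Type*) [AddCommGroup A]
    (ρ : H →* Multiplicative (AddAut A)) (φ : H → H → A)
    (hφ1 : ∀ h : H, φ 1 h = 0) (hφ2 : ∀ h : H, φ h 1 = 0)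
    [grp : Group (A × H)]
    (hmul : ∀ (a b : A) (h k : H), (a, h) * (b, k) = (a + ρ h b + φ h k, h * k))
    (hone : (1 : A × H) = (0, 1)) :
    ∀ (a : A) (k : H),
      (a, k) ∈ Subgroup.center (A × H) ↔
        ((∀ b : A, ρ k b = b) ∧ ∀ h : H, φ k h - φ h k = ρ h a - a) := by
  intro a k
  rw [Subgroup.mem_center_iff]
  constructor
  · intro hc
    have key : ∀ (b : A) (h : H), b + ρ h a + φ h k = a + ρ k b + φ k h := by
      intro b h
      have := hc (b, h)
      rw [hmul, hmul] at this
      exact (Prod.mk.injEq _ _ _ _).mp this |>.1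
    have hfix : ∀ b : A, ρ k b = b := by
      intro b
      have := key b 1
      simp [hφ1, hφ2, map_one] at this
      linear_combination (norm := abel) -this
    constructor
    · exact hfix
    · intro h
      have := key 0 h
      simp [hfix] at this
      linear_combination (norm := abel) -this
  · rintro ⟨hfix, hc⟩ g
    obtain ⟨b, h⟩ := g
    rw [hmul, hmul, Prod.mk.injEq]
    refine ⟨?_, mul_comm h k⟩
    rw [hfix b]
    have := hc h
    linear_combination (norm := abel) -this
end

section
/- Let G = A ⋊_{ρ,φ} H and G̃ = Ã ⋊_{ρ̃,φ̃} H̃ be the realizing groups of two data (H, A, ρ, φ) and (H̃, Ã, ρ̃, φ̃). Then the following are equivalent: (a) there exist a group isomorphism σ_H : H ≃* H̃, an additive group isomorphism σ_A : A ≃+ Ã, and a map f : H → Ã such that σ_A (h ▹ a) = (σ_H h) ▹̃ (σ_A a) for all h ∈ H, a ∈ A, and φ̃ (σ_H h) (σ_H k) − σ_A (φ h k) = (σ_H h) ▹̃ (f k) − f (h * k) + f h for all h, k ∈ H (i.e., the two data are equivalent); (b) there exists a group isomorphism σ : G ≃* G̃ that maps the subgroup {(a, 1) : a ∈ A} onto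 the subgroup {(ã, 1) : ã ∈ Ã}. -/
/-- Two group extension data `(H, A, ρ, φ)` and `(H', A', ρ', φ')` (with realizing groups
modeled by group structures on `A × H` resp. `A' × H'`) are equivalent iff there is a group
isomorphism of the realizing groups mapping the subgroup `{(a, 1)}` onto `{(a', 1)}`. -/
theorem data_equivalent_iff_iso_preserving_kernel
    (H : Type*) [Group H] (A : Type*) [AddCommGroup A]
    (ρ : H →* Multiplicative (AddAut A)) (φ : H → H → A)
    (hφ1 : ∀ h : H, φ 1 h = 0) (hφ2 : ∀ h : H, φ h 1 = 0)
    (H' : Type*) [Group H'] (A' : Type*) [AddCommGroup A']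
    (ρ' : H' →* Multiplicative (AddAut A')) (φ' : H' → H' → A')
    (hφ1' : ∀ h : H', φ' 1 h = 0) (hφ2' : ∀ h : H', φ' h 1 = 0)
    [grp : Group (A × H)]
    (hmul : ∀ (a b : A) (h k : H), (a, h) * (b, k) = (a + (ρ h).toAdd b + φ h k, h * k))
    (hone : (1 : A × H) = (0, 1))
    [grp' : Group (A' × H')]
    (hmul' : ∀ (a b : A') (h k : H'), (a, h) * (b, k) = (a + (ρ' h).toAdd b + φ' h k, h * k))
    (hone' : (1 : A' × H') = (0, 1)) :
    (∃ (σH : H ≃* H') (σA : A ≃+ A') (f : H → A'),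
        (∀ (h : H) (a : A), σA ((ρ h).toAdd a) = (ρ' (σH h)).toAdd (σA a)) ∧
        (∀ h k : H, φ' (σH h) (σH k) - σA (φ h k) =
          (ρ' (σH h)).toAdd (f k) - f (h * k) + f h)) ↔
      (∃ σ : (A × H) ≃* (A' × H'),
        (⇑σ) '' {x : A × H | x.2 = 1} = {y : A' × H' | y.2 = 1}) := by
  constructor
  · rintro ⟨σH, σA, f, hact, hcoc⟩
    have hf1 : f 1 = 0 := by
      have h := hcoc 1 1
      simp [hφ1', hφ1, map_one] at h
      exact h.symm
    refine ⟨{ toFun := fun p => (σA p.1 - f p.2, σH p.2)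
              invFun := fun q => (σA.symm (q.1 + f (σH.symm q.2)), σH.symm q.2)
              left_inv := by intro p; simp
              right_inv := by intro q; simp
              map_mul' := ?_ }, ?_⟩
    · rintro ⟨a, h⟩ ⟨b, k⟩
      rw [hmul]
      dsimp only
      rw [hmul']
      have hc : φ' (σH h) (σH k) =
          σA (φ h k) + ((ρ' (σH h)).toAdd (f k) - f (h * k) + f h) := by
        rw [← hcoc h k]; abel
      refine Prod.ext ?_ (map_mul σH h k)
      dsimp only
      rw [hc, map_add, map_add, hact, map_sub]
      abel
    · ext ⟨a', h'⟩
      simp only [Set.mem_image, Set.mem_setOf_eq]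
      constructor
      · rintro ⟨⟨a, h⟩, h1, h2⟩
        simp only [Set.mem_setOf_eq] at h1
        subst h1
        have h3 := congrArg Prod.snd h2
        simp only [MulEquiv.coe_mk, Equiv.coe_fn_mk] at h3
        rw [← h3, map_one σH]
      · intro h1
        subst h1
        exact ⟨(σA.symm a', 1), rfl, by simp [hf1]⟩
  · rintro ⟨σ, hσ⟩
    -- membership facts
    have hmem : ∀ a : A, (σ (a, 1)).2 = 1 := by
      intro a
      have : σ (a, 1) ∈ {y : A' × H' | y.2 = 1} := by
        rw [← hσ]; exact ⟨(a, 1), rfl, rfl⟩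
      exact this
    have hmem' : ∀ a' : A', (σ.symm (a', 1)).2 = 1 := by
      intro a'
      have h1 : ((a', 1) : A' × H') ∈ (⇑σ) '' {x : A × H | x.2 = 1} := by
        rw [hσ]; exact rfl
      obtain ⟨x, hx, hx2⟩ := h1
      have : σ.symm (a', 1) = x := by rw [← hx2]; simp
      rw [this]; exact hx
    have hsig : ∀ a : A, σ (a, 1) = ((σ (a, 1)).1, 1) := by
      intro a; exact Prod.ext rfl (hmem a)
    have hsig' : ∀ a' : A', σ.symm (a', 1) = ((σ.symm (a', 1)).1, 1) := by
      intro a'; exact Prod.ext rfl (hmem' a')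
    -- decomposition
    have hdec : ∀ a : A, ∀ h : H, ((a, h) : A × H) = (a, 1) * (0, h) := by
      intro a h
      rw [hmul]; simp [hφ1]
    have hdec' : ∀ a' : A', ∀ h' : H', ((a', h') : A' × H') = (a', 1) * (0, h') := by
      intro a' h'
      rw [hmul']; simp [hφ1']
    -- second component of σ depends only on second component
    have hsnd : ∀ a : A, ∀ h : H, (σ (a, h)).2 = (σ (0, h)).2 := by
      intro a h
      rw [hdec a h, map_mul, hsig a]
      conv_lhs => rw [show σ (0, h) = ((σ (0, h)).1, (σ (0, h)).2) from rfl]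
      rw [hmul']
      exact one_mul _
    have hsnd' : ∀ a' : A', ∀ h' : H', (σ.symm (a', h')).2 = (σ.symm (0, h')).2 := by
      intro a' h'
      rw [hdec' a' h', map_mul, hsig' a']
      conv_lhs => rw [show σ.symm (0, h') = ((σ.symm (0, h')).1, (σ.symm (0, h')).2) from rfl]
      rw [hmul]
      exact one_mul _
    -- first component of σ (a,h)
    have hfst : ∀ a : A, ∀ h : H,
        (σ (a, h)).1 = (σ (a, 1)).1 + (σ (0, h)).1 := by
      intro a h
      rw [hdec a h, map_mul, hsig a]
      conv_lhs => rw [show σ (0, h) = ((σ (0, h)).1, (σ (0, h)).2) from rfl]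
      rw [hmul']
      simp [hφ1']
    -- sA additive
    have hsA : ∀ a b : A, (σ (a + b, 1)).1 = (σ (a, 1)).1 + (σ (b, 1)).1 := by
      intro a b
      have h1 : ((a + b, 1) : A × H) = (a, 1) * (b, 1) := by
        rw [hmul]; simp [hφ1, map_one]
      rw [h1, map_mul, hsig a, hsig b, hmul']
      simp [hφ1', map_one]
    have htA : ∀ a' b' : A', (σ.symm (a' + b', 1)).1 = (σ.symm (a', 1)).1 + (σ.symm (b', 1)).1 := by
      intro a' b'
      have h1 : ((a' + b', 1) : A' × H') = (a', 1) * (b', 1) := by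
        rw [hmul']; simp [hφ1', map_one]
      rw [h1, map_mul, hsig' a', hsig' b', hmul]
      simp [hφ1, map_one]
    -- inverses for A part
    have hAleft : ∀ a : A, (σ.symm ((σ (a, 1)).1, 1)).1 = a := by
      intro a
      rw [← hsig a]; simp
    have hAright : ∀ a' : A', (σ ((σ.symm (a', 1)).1, 1)).1 = a' := by
      intro a'
      rw [← hsig' a']; simp
    -- sH multiplicative and cocycle relation
    have hmul00 : ∀ h k : H, ((0 : A), h) * (0, k) = (φ h k, h * k) := by
      intro h k; rw [hmul]; simp
    have hmul00' : ∀ h' k' : H', ((0 : A'), h') * (0, k') = (φ' h' k', h' * k') := by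
      intro h' k'; rw [hmul']; simp
    have hkey : ∀ h k : H,
        (σ (φ h k, 1)).1 + (σ (0, h * k)).1 =
          (σ (0, h)).1 + (ρ' ((σ (0, h)).2)).toAdd ((σ (0, k)).1) + φ' ((σ (0, h)).2) ((σ (0, k)).2)
        ∧ (σ (0, h * k)).2 = (σ (0, h)).2 * (σ (0, k)).2 := by
      intro h k
      have h1 : σ (φ h k, h * k) = σ (0, h) * σ (0, k) := by
        rw [← map_mul, hmul00]
      have h2 : σ (0, h) * σ (0, k) =
          ((σ (0, h)).1 + (ρ' ((σ (0, h)).2)).toAdd ((σ (0, k)).1) + φ' ((σ (0, h)).2) ((σ (0, k)).2),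
            (σ (0, h)).2 * (σ (0, k)).2) := by
        conv_lhs => rw [show σ (0, h) = ((σ (0, h)).1, (σ (0, h)).2) from rfl,
          show σ (0, k) = ((σ (0, k)).1, (σ (0, k)).2) from rfl]
        rw [hmul']
      constructor
      · have := congrArg Prod.fst (h1.trans h2)
        rw [hfst] at this
        exact this
      · have := congrArg Prod.snd (h1.trans h2)
        rw [hsnd] at this
        exact this
    have hsHmul : ∀ h k : H, (σ (0, h * k)).2 = (σ (0, h)).2 * (σ (0, k)).2 :=
      fun h k => (hkey h k).2
    -- inverses for H part
    have hHleft : ∀ h : H, (σ.symm (0, (σ (0, h)).2)).2 = h := by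
      intro h
      have h1 : ((0 : A), h) = σ.symm ((σ (0, h)).1, 1) * σ.symm (0, (σ (0, h)).2) := by
        rw [← map_mul, ← hdec' (σ (0, h)).1 (σ (0, h)).2]
        simp
      have h2 := congrArg Prod.snd h1
      rw [hsig' (σ (0, h)).1] at h2
      conv_rhs at h2 => rw [show σ.symm (0, (σ (0,h)).2) = ((σ.symm (0, (σ (0,h)).2)).1, (σ.symm (0, (σ (0,h)).2)).2) from rfl]
      rw [hmul] at h2
      simpa using h2.symm
    have hHright : ∀ h' : H', (σ (0, (σ.symm (0, h')).2)).2 = h' := by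
      intro h'
      have h1 : ((0 : A'), h') = σ ((σ.symm (0, h')).1, 1) * σ (0, (σ.symm (0, h')).2) := by
        rw [← map_mul, ← hdec (σ.symm (0, h')).1 (σ.symm (0, h')).2]
        simp
      have h2 := congrArg Prod.snd h1
      rw [hsig (σ.symm (0, h')).1] at h2
      conv_rhs at h2 => rw [show σ (0, (σ.symm (0,h')).2) = ((σ (0, (σ.symm (0,h')).2)).1, (σ (0, (σ.symm (0,h')).2)).2) from rfl]
      rw [hmul'] at h2
      simpa using h2.symm
    -- action compatibility
    have hactkey : ∀ (h : H) (a : A),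
        (σ ((ρ h).toAdd a, 1)).1 = (ρ' ((σ (0, h)).2)).toAdd ((σ (a, 1)).1) := by
      intro h a
      have h1 : ((0 : A), h) * (a, 1) = ((ρ h).toAdd a, 1) * (0, h) := by
        rw [hmul, hmul]
        simp [hφ1, hφ2]
      have h2 := congrArg (fun x => (σ x).1) h1
      rw [map_mul, map_mul, hsig a, hsig ((ρ h).toAdd a)] at h2
      conv_lhs at h2 => rw [show σ (0, h) = ((σ (0, h)).1, (σ (0, h)).2) from rfl]
      conv_rhs at h2 => rw [show σ (0, h) = ((σ (0, h)).1, (σ (0, h)).2) from rfl]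
      rw [hmul', hmul'] at h2
      simp only [hφ2', hφ1', map_one] at h2
      -- h2 : fH h + ρ' (sH h) (sA a) + 0 = sA ((ρ h).toAdd a) + fH h + 0
      have h3 : (σ (0, h)).1 + (ρ' ((σ (0, h)).2)).toAdd ((σ (a, 1)).1) =
          (σ ((ρ h).toAdd a, 1)).1 + (σ (0, h)).1 := by
        simpa using h2
      have h4 : (σ (0, h)).1 + (ρ' ((σ (0, h)).2)).toAdd ((σ (a, 1)).1) =
          (σ (0, h)).1 + (σ ((ρ h).toAdd a, 1)).1 := by rw [h3, add_comm]
      exact (add_left_cancel h4).symm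
    -- assemble the data equivalence
    refine ⟨{ toFun := fun h => (σ (0, h)).2
              invFun := fun h' => (σ.symm (0, h')).2
              left_inv := hHleft
              right_inv := hHright
              map_mul' := hsHmul },
            { toFun := fun a => (σ (a, 1)).1
              invFun := fun a' => (σ.symm (a', 1)).1
              left_inv := hAleft
              right_inv := hAright
              map_add' := hsA },
            fun h => -(σ (0, h)).1, ?_, ?_⟩
    · intro h a
      exact (hactkey h a).symm ▸ rfl
    · intro h k
      have h1 := (hkey h k).1
      have h2 : (σ (φ h k, 1)).1 + (σ (0, h * k)).1 =
          (σ (0, h)).1 + (ρ' ((σ (0, h)).2)).toAdd ((σ (0, k)).1) + φ' ((σ (0, h)).2) ((σ (0, k)).2) := h1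
      dsimp only [MulEquiv.coe_mk, Equiv.coe_fn_mk, AddEquiv.coe_mk]
      rw [map_neg]
      -- goal: φ' (sH h) (sH k) - (σ (φ h k,1)).1 =
      --   -(ρ' (sH h) ((σ (0,k)).1)) - -(σ (0,h*k)).1 + -(σ (0,h)).1
      have h3 : φ' ((σ (0, h)).2) ((σ (0, k)).2) =
          (σ (φ h k, 1)).1 + (σ (0, h * k)).1 - (σ (0, h)).1
            - (ρ' ((σ (0, h)).2)).toAdd ((σ (0, k)).1) := by
        rw [h2]; abel
      rw [h3]; abel
end

section
/- Let p be a prime, m ≥ 1, H = (Fin m → ZMod p), and A an additive commutative group with p • a = 0 for all a ∈ A. Given a family c : Fin m → Fin m → A, define φ : H → H → A by φ i j = ∑_r (((i r).val + (j r).val) / p) • c r r − ∑_{r < s} ((j r).val * (i s).val) • c r s (natural-number division and scalar multiplication). Then: (a) φ is a normalized 2-cocycle for the trivial action, i.e., φ 0 j = 0 = φ i 0 and φ j k − φ (i + j) k + φ i (j + k) − φ i j = 0 for all i, j, k ∈ H; (b) there exists f : H → A with φ i j = f j − f (i + j) + f i for all i, j ∈ H (i.e., φ is a 2-coboundary) if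 and only if φ is identically zero, which holds if and only if c r s = 0 for all r ≤ s. -/
lemma carry_nat_id (p x y z : ℕ) (hp : 0 < p) :
    (y + z) / p + (x + (y + z) % p) / p = ((x + y) % p + z) / p + (x + y) / p := by
  have e1 : (x + y + z) / p = (x + (y + z) % p) / p + (y + z) / p := by
    conv_lhs => rw [show x + y + z = x + (y + z) % p + p * ((y + z) / p) by
      conv_rhs => rw [add_assoc, Nat.mod_add_div]
      omega]
    exact Nat.add_mul_div_left _ _ hp
  have e2 : (x + y + z) / p = ((x + y) % p + z) / p + (x + y) / p := by
    conv_lhs => rw [show x + y + z = (x + y) % p + z + p * ((x + y) / p) by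
      conv_rhs => rw [add_right_comm, Nat.mod_add_div]]
    exact Nat.add_mul_div_left _ _ hp
  omega

/-- Let `p` be a prime, `m ≥ 1`, `H = Fin m → ZMod p`, and `A` an additive commutative group
with `p • a = 0` for all `a`. Given `c : Fin m → Fin m → A`, define
`φ i j = ∑_r ((i r).val + (j r).val) / p • c r r - ∑_{r < s} ((j r).val * (i s).val) • c r s`.
Then (a) `φ` is a normalized 2-cocycle for the trivial action, and (b) `φ` is a 2-coboundary
iff it is identically zero, iff `c r s = 0` for all `r ≤ s`. -/
theorem cochain_formula_cocycle_and_coboundary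
    (p : ℕ) (hp : p.Prime) (m : ℕ) (hm : 1 ≤ m)
    (A : Type*) [AddCommGroup A] (hA : ∀ a : A, p • a = 0)
    (c : Fin m → Fin m → A)
    (φ : (Fin m → ZMod p) → (Fin m → ZMod p) → A)
    (hφ : ∀ i j, φ i j =
      (∑ r, (((i r).val + (j r).val) / p) • c r r)
        - ∑ r, ∑ s ∈ Finset.Ioi r, ((j r).val * (i s).val) • c r s) :
    ((∀ j, φ 0 j = 0) ∧ (∀ i, φ i 0 = 0) ∧
      (∀ i j k, φ j k - φ (i + j) k + φ i (j + k) - φ i j = 0)) ∧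
    ((∃ f : (Fin m → ZMod p) → A, ∀ i j, φ i j = f j - f (i + j) + f i) ↔
      (∀ i j, φ i j = 0)) ∧
    ((∀ i j, φ i j = 0) ↔ ∀ r s : Fin m, r ≤ s → c r s = 0) := by
  haveI : Fact p.Prime := ⟨hp⟩
  haveI : Fact (1 < p) := ⟨hp.one_lt⟩
  have hp0 : 0 < p := hp.pos
  have hp2 : 2 ≤ p := hp.two_le
  -- natural smul only depends on the coefficient mod p
  have hbase : ∀ (n : ℕ) (a : A), n • a = (n % p) • a := by
    intro n a
    conv_lhs => rw [show n = p * (n / p) + n % p from (Nat.div_add_mod n p).symm]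
    rw [add_nsmul, mul_smul, hA, zero_add]
  have hcast : ∀ (n k : ℕ) (a : A), ((n : ZMod p) = (k : ZMod p)) → n • a = k • a := by
    intro n k a h
    rw [hbase n a, hbase k a]
    congr 1
    exact (ZMod.natCast_eq_natCast_iff n k p).mp h
  -- normalization
  have hz1 : ∀ j, φ 0 j = 0 := by
    intro j
    rw [hφ]
    rw [Finset.sum_eq_zero fun r _ => by
        simp only [Pi.zero_apply, ZMod.val_zero, zero_add]
        rw [Nat.div_eq_of_lt (ZMod.val_lt _), zero_nsmul],
      Finset.sum_eq_zero fun r _ => Finset.sum_eq_zero fun s _ => by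
        simp only [Pi.zero_apply, ZMod.val_zero, mul_zero, zero_nsmul],
      sub_zero]
  have hz2 : ∀ i, φ i 0 = 0 := by
    intro i
    rw [hφ]
    rw [Finset.sum_eq_zero fun r _ => by
        simp only [Pi.zero_apply, ZMod.val_zero, add_zero]
        rw [Nat.div_eq_of_lt (ZMod.val_lt _), zero_nsmul],
      Finset.sum_eq_zero fun r _ => Finset.sum_eq_zero fun s _ => by
        simp only [Pi.zero_apply, ZMod.val_zero, zero_mul, zero_nsmul],
      sub_zero]
  -- cocycle identity
  have hcoc : ∀ i j k, φ j k - φ (i + j) k + φ i (j + k) - φ i j = 0 := by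
    intro i j k
    rw [hφ j k, hφ (i + j) k, hφ i (j + k), hφ i j]
    have hD : (∑ r, (((j r).val + (k r).val) / p) • c r r)
        + (∑ r, (((i r).val + ((j + k) r).val) / p) • c r r)
        = (∑ r, ((((i + j) r).val + (k r).val) / p) • c r r)
        + (∑ r, (((i r).val + (j r).val) / p) • c r r) := by
      rw [← Finset.sum_add_distrib, ← Finset.sum_add_distrib]
      refine Finset.sum_congr rfl fun r _ => ?_
      rw [← add_nsmul, ← add_nsmul]
      congr 1
      rw [Pi.add_apply, Pi.add_apply, ZMod.val_add, ZMod.val_add]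
      exact carry_nat_id p _ _ _ hp0
    have hO : (∑ r, ∑ s ∈ Finset.Ioi r, ((k r).val * (j s).val) • c r s)
        + (∑ r, ∑ s ∈ Finset.Ioi r, (((j + k) r).val * (i s).val) • c r s)
        = (∑ r, ∑ s ∈ Finset.Ioi r, ((k r).val * ((i + j) s).val) • c r s)
        + (∑ r, ∑ s ∈ Finset.Ioi r, ((j r).val * (i s).val) • c r s) := by
      rw [← Finset.sum_add_distrib, ← Finset.sum_add_distrib]
      refine Finset.sum_congr rfl fun r _ => ?_
      rw [← Finset.sum_add_distrib, ← Finset.sum_add_distrib]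
      refine Finset.sum_congr rfl fun s _ => ?_
      rw [← add_nsmul, ← add_nsmul]
      apply hcast
      push_cast
      simp only [ZMod.natCast_val, ZMod.cast_id', id_eq, ZMod.cast_id, Pi.add_apply]
      ring
    have expand : ∀ a b cc d e f' g h : A, a + cc = b + d → e + g = f' + h →
        (a - e) - (b - f') + (cc - g) - (d - h) = 0 := by
      intro a b cc d e f' g h h1 h2
      have h3 : (a - e) - (b - f') + (cc - g) - (d - h)
          = (a + cc) - (b + d) - ((e + g) - (f' + h)) := by abel
      rw [h3, h1, h2]
      simp
    exact expand _ _ _ _ _ _ _ _ hD hO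
  -- support lemmas
  have hsupp : ∀ (r : Fin m) (x : ZMod p) (t : Fin m), t ≠ r →
      (Pi.single r x : Fin m → ZMod p) t = 0 := by
    intro r x t ht
    exact Pi.single_eq_of_ne (M := fun _ => ZMod p) ht x
  have hdiag0 : ∀ (i j : Fin m → ZMod p), (∀ r, (i r).val + (j r).val < p) →
      (∑ r, (((i r).val + (j r).val) / p) • c r r) = 0 := by
    intro i j h
    refine Finset.sum_eq_zero fun r _ => ?_
    rw [Nat.div_eq_of_lt (h r), zero_nsmul]
  have hdiag : ∀ (i j : Fin m → ZMod p) (a : Fin m),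
      (∀ t, t ≠ a → i t = 0) → (∀ t, t ≠ a → j t = 0) →
      (∑ r, (((i r).val + (j r).val) / p) • c r r)
        = (((i a).val + (j a).val) / p) • c a a := by
    intro i j a hi hj
    rw [Finset.sum_eq_single a]
    · intro t _ hne
      rw [hi t hne, hj t hne, ZMod.val_zero, Nat.add_zero, Nat.zero_div, zero_nsmul]
    · intro h; exact absurd (Finset.mem_univ a) h
  have hoff : ∀ (i j : Fin m → ZMod p) (a b : Fin m),
      (∀ t, t ≠ a → i t = 0) → (∀ t, t ≠ b → j t = 0) →
      (∑ r, ∑ s ∈ Finset.Ioi r, ((j r).val * (i s).val) • c r s)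
        = (if b < a then ((j b).val * (i a).val) • c b a else 0) := by
    intro i j a b hi hj
    rw [Finset.sum_eq_single b]
    · by_cases hba : b < a
      · rw [if_pos hba, Finset.sum_eq_single a]
        · intro s' _ hne
          rw [hi s' hne, ZMod.val_zero, mul_zero, zero_nsmul]
        · intro h; exact absurd (Finset.mem_Ioi.mpr hba) h
      · rw [if_neg hba]
        refine Finset.sum_eq_zero fun s' hs' => ?_
        have hne : s' ≠ a := by rintro rfl; exact hba (Finset.mem_Ioi.mp hs')
        rw [hi s' hne, ZMod.val_zero, mul_zero, zero_nsmul]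
    · intro r' _ hne
      refine Finset.sum_eq_zero fun s' _ => ?_
      rw [hj r' hne, ZMod.val_zero, zero_mul, zero_nsmul]
    · intro h; exact absurd (Finset.mem_univ b) h
  have hsingleval : ∀ (r t : Fin m), ((Pi.single r (1 : ZMod p) : Fin m → ZMod p) t).val = if t = r then 1 else 0 := by
    intro r t
    rw [Pi.single_apply, apply_ite ZMod.val, ZMod.val_one, ZMod.val_zero]
  -- c vanishes on r ≤ s given a coboundary representation
  have hcbzero : (∃ f : (Fin m → ZMod p) → A, ∀ i j, φ i j = f j - f (i + j) + f i) →
      ∀ r s : Fin m, r ≤ s → c r s = 0 := by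
    rintro ⟨f, hf⟩ r s hrs
    rcases eq_or_lt_of_le hrs with rfl | hlt
    · -- diagonal case via telescoping
      have hsup : ∀ (k : ZMod p) (t : Fin m), t ≠ r → (Pi.single r k : Fin m → ZMod p) t = 0 :=
        fun k t ht => hsupp r k t ht
      have hval : ∀ k : ℕ, k < p →
          φ (Pi.single r 1) (Pi.single r ((k : ℕ) : ZMod p)) = ((1 + k) / p) • c r r := by
        intro k hk
        rw [hφ, hdiag _ _ r (hsup 1) (hsup _), hoff _ _ r r (hsup 1) (hsup _),
          if_neg (lt_irrefl r), sub_zero]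
        rw [Pi.single_eq_same, Pi.single_eq_same, ZMod.val_one, ZMod.val_natCast,
          Nat.mod_eq_of_lt hk]
      have t1 : ∑ k ∈ Finset.range p, φ (Pi.single r 1) (Pi.single r ((k : ℕ) : ZMod p))
          = c r r := by
        rw [Finset.sum_congr rfl fun k hk => hval k (Finset.mem_range.mp hk),
          Finset.sum_eq_single (p - 1)]
        · rw [show (1 + (p - 1)) / p = 1 by rw [show 1 + (p - 1) = p by omega, Nat.div_self hp0],
            one_nsmul]
        · intro b hb hne
          have := Finset.mem_range.mp hb
          rw [Nat.div_eq_of_lt (by omega), zero_nsmul]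
        · intro h; exact absurd (Finset.mem_range.mpr (by omega)) h
      have t2 : ∑ k ∈ Finset.range p, φ (Pi.single r 1) (Pi.single r ((k : ℕ) : ZMod p)) = 0 := by
        have h1 : ∀ k : ℕ, φ (Pi.single r 1) (Pi.single r ((k : ℕ) : ZMod p))
            = (f (Pi.single r ((k : ℕ) : ZMod p)) - f (Pi.single r (((k + 1 : ℕ)) : ZMod p)))
              + f (Pi.single r 1) := by
          intro k
          have hadd : Pi.single r (1 : ZMod p) + Pi.single r ((k : ℕ) : ZMod p)
              = (Pi.single r (((k + 1 : ℕ)) : ZMod p) : Fin m → ZMod p) := by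
            rw [← Pi.single_add]
            congr 1
            push_cast
            ring_nf
          rw [hf, hadd, sub_add]
        rw [Finset.sum_congr rfl fun k _ => h1 k, Finset.sum_add_distrib,
          Finset.sum_range_sub' (fun k => f (Pi.single r ((k : ℕ) : ZMod p))) p,
          Finset.sum_const, Finset.card_range, hA]
        simp only [Nat.cast_zero, ZMod.natCast_self, add_zero]
        rw [sub_self]
      rw [← t1, t2]
    · -- off-diagonal case via symmetry
      have hsymm : φ (Pi.single s 1) (Pi.single r 1) = φ (Pi.single r 1) (Pi.single s 1) := by
        rw [hf, hf, add_comm (Pi.single s 1 : Fin m → ZMod p) (Pi.single r 1)]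
        abel
      have hlt' : ∀ (a b : Fin m), a ≠ b → ∀ t : Fin m,
          ((Pi.single a (1 : ZMod p) : Fin m → ZMod p) t).val + ((Pi.single b (1 : ZMod p) : Fin m → ZMod p) t).val < p := by
        intro a b hab t
        rw [hsingleval, hsingleval]
        split_ifs with h1 h2 h2
        · exact absurd (h1.symm.trans h2) hab
        · omega
        · omega
        · omega
      have e1 : φ (Pi.single s 1) (Pi.single r 1) = -(c r s) := by
        rw [hφ, hdiag0 _ _ (hlt' s r hlt.ne'), hoff _ _ s r (hsupp s 1) (hsupp r 1),
          if_pos hlt, zero_sub]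
        rw [Pi.single_eq_same, Pi.single_eq_same, ZMod.val_one, one_mul, one_nsmul]
      have e2 : φ (Pi.single r 1) (Pi.single s 1) = 0 := by
        rw [hφ, hdiag0 _ _ (hlt' r s hlt.ne), hoff _ _ r s (hsupp r 1) (hsupp s 1),
          if_neg (by exact fun h => absurd (hlt.trans h) (lt_irrefl r)), sub_zero]
      have := hsymm
      rw [e1, e2] at this
      exact neg_eq_zero.mp this
  -- c zero implies φ zero
  have hL : (∀ r s : Fin m, r ≤ s → c r s = 0) → ∀ i j, φ i j = 0 := by
    intro hc i j
    rw [hφ]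
    rw [Finset.sum_eq_zero fun r _ => by rw [hc r r le_rfl, smul_zero],
      Finset.sum_eq_zero fun r _ => Finset.sum_eq_zero fun s hs => by
        rw [hc r s (le_of_lt (Finset.mem_Ioi.mp hs)), smul_zero],
      sub_zero]
  refine ⟨⟨hz1, hz2, hcoc⟩, ⟨fun h => hL (hcbzero h), fun h0 => ⟨0, fun i j => by
      rw [h0 i j]; simp⟩⟩,
    ⟨fun h0 => hcbzero ⟨0, fun i j => by rw [h0 i j]; simp⟩, hL⟩⟩
end

section
/- Let G be a finite group with Nat.card G ≤ 3^6 = 729 such that g^3 = 1 for every g ∈ G. Then the commutator subgroup ⁅G,G⁆ is contained in the center of G; in particular G is nilpotent of class at most 2. -/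
section ExpThree

variable {G : Type*} [Group G]

open scoped commutatorElement

private lemma cube_rel (hexp : ∀ g : G, g ^ 3 = 1) (x y : G) :
    x * y * x = y⁻¹ * x⁻¹ * y⁻¹ := by
  have h : (x * y) * (x * y) * (x * y) = 1 := by
    have := hexp (x * y); rwa [pow_succ, pow_succ, pow_one] at this
  rw [← mul_inv_eq_one]
  calc x * y * x * (y⁻¹ * x⁻¹ * y⁻¹)⁻¹ = (x * y) * (x * y) * (x * y) := by group
    _ = 1 := h

private lemma conj_comm1 (hexp : ∀ g : G, g ^ 3 = 1) (x y : G) :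
    Commute x (y * x * y⁻¹) := by
  have hy := hexp y
  have hy3 : y * y * y = 1 := by rwa [pow_succ, pow_succ, pow_one] at hy
  have hy2 : y * y = y⁻¹ := eq_inv_of_mul_eq_one_left hy3
  have hy2' : y⁻¹ * y⁻¹ = y := by rw [← mul_inv_rev, hy2, inv_inv]
  have L : x * (y * x * y⁻¹) = y⁻¹ * x⁻¹ * y := by
    calc x * (y * x * y⁻¹) = (x * y * x) * y⁻¹ := by group
      _ = (y⁻¹ * x⁻¹ * y⁻¹) * y⁻¹ := by rw [cube_rel hexp x y]
      _ = y⁻¹ * x⁻¹ * (y⁻¹ * y⁻¹) := by group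
      _ = y⁻¹ * x⁻¹ * y := by rw [hy2']
  have R : (y * x * y⁻¹) * x = y⁻¹ * x⁻¹ * y := by
    calc (y * x * y⁻¹) * x = y * (x * y⁻¹ * x) := by group
      _ = y * ((y⁻¹)⁻¹ * x⁻¹ * (y⁻¹)⁻¹) := by rw [cube_rel hexp x y⁻¹]
      _ = (y * y) * (x⁻¹ * y) := by group
      _ = y⁻¹ * (x⁻¹ * y) := by rw [hy2]
      _ = y⁻¹ * x⁻¹ * y := by group
  exact L.trans R.symm

private lemma conj_comm2 (hexp : ∀ g : G, g ^ 3 = 1) (a g h : G) :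
    Commute (g * a * g⁻¹) (h * a * h⁻¹) := by
  have e : a * ((g⁻¹ * h) * a * (g⁻¹ * h)⁻¹) = ((g⁻¹ * h) * a * (g⁻¹ * h)⁻¹) * a :=
    conj_comm1 hexp a (g⁻¹ * h)
  show (g * a * g⁻¹) * (h * a * h⁻¹) = (h * a * h⁻¹) * (g * a * g⁻¹)
  calc (g * a * g⁻¹) * (h * a * h⁻¹)
      = g * (a * ((g⁻¹ * h) * a * (g⁻¹ * h)⁻¹)) * g⁻¹ := by group
    _ = g * (((g⁻¹ * h) * a * (g⁻¹ * h)⁻¹) * a) * g⁻¹ := by rw [e]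
    _ = (h * a * h⁻¹) * (g * a * g⁻¹) := by group

private lemma engel2 (hexp : ∀ g : G, g ^ 3 = 1) (a b : G) :
    Commute ⁅a, b⁆ b := by
  have h1 : Commute (a * b * a⁻¹) b := (conj_comm1 hexp b a).symm
  have h2 : Commute ((a * b * a⁻¹) * b⁻¹) b := h1.mul_left (Commute.refl b).inv_left
  have : ⁅a, b⁆ = (a * b * a⁻¹) * b⁻¹ := by rw [commutatorElement_def]
  rwa [this]

private lemma engel1 (hexp : ∀ g : G, g ^ 3 = 1) (a b : G) :
    Commute ⁅a, b⁆ a := by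
  have h1 : Commute a (b * a⁻¹ * b⁻¹) := by
    have := (conj_comm1 hexp a⁻¹ b).inv_left
    rwa [inv_inv] at this
  have h2 : Commute (a * (b * a⁻¹ * b⁻¹)) a := (Commute.refl a).mul_left h1.symm
  have : ⁅a, b⁆ = a * (b * a⁻¹ * b⁻¹) := by rw [commutatorElement_def]; group
  rwa [this]

/-- The key lemma: in an exponent-3 group, if `⁅x,z⁆` commutes with `y` then
`⁅x,y⁆` commutes with `z`. -/
private lemma key (hexp : ∀ g : G, g ^ 3 = 1) {x y z : G}
    (h : Commute ⁅x, z⁆ y) : Commute ⁅x, y⁆ z := by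
  have hE : Commute ⁅x, y * z⁆ (y * z) := engel2 hexp x (y * z)
  have hyd : y * ⁅x, z⁆ * y⁻¹ = ⁅x, z⁆ := by
    have := h.symm.eq
    calc y * ⁅x, z⁆ * y⁻¹ = (y * ⁅x, z⁆) * y⁻¹ := by group
      _ = (⁅x, z⁆ * y) * y⁻¹ := by rw [this]
      _ = ⁅x, z⁆ := by group
  have hid : ⁅x, y * z⁆ = ⁅x, y⁆ * ⁅x, z⁆ := by
    calc ⁅x, y * z⁆ = ⁅x, y⁆ * (y * ⁅x, z⁆ * y⁻¹) := by
          simp only [commutatorElement_def]; group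
      _ = ⁅x, y⁆ * ⁅x, z⁆ := by rw [hyd]
  rw [hid] at hE
  have h1 : Commute (⁅x, y⁆ * ⁅x, z⁆) y := (engel2 hexp x y).mul_left h
  have h2 : Commute (⁅x, y⁆ * ⁅x, z⁆) (y⁻¹ * (y * z)) := h1.inv_right.mul_right hE
  have h3 : Commute (⁅x, y⁆ * ⁅x, z⁆) z := by rwa [inv_mul_cancel_left] at h2
  have h4 : Commute ((⁅x, y⁆ * ⁅x, z⁆) * ⁅x, z⁆⁻¹) z :=
    h3.mul_left (engel2 hexp x z).inv_left
  rwa [mul_inv_cancel_right] at h4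

private lemma nc_comm (hexp : ∀ g : G, g ^ 3 = 1) (a : G) {u v : G}
    (hu : u ∈ Subgroup.normalClosure {a}) (hv : v ∈ Subgroup.normalClosure {a}) :
    Commute u v := by
  refine Subgroup.closure_induction₂ (k := Group.conjugatesOfSet {a})
    (p := fun u v _ _ => Commute u v) ?_ ?_ ?_ ?_ ?_ ?_ ?_ hu hv
  · intro p q hp hq
    rw [Group.mem_conjugatesOfSet_iff] at hp hq
    obtain ⟨b, hb, hcb⟩ := hp
    obtain ⟨b', hb', hcb'⟩ := hq
    rw [Set.mem_singleton_iff] at hb hb'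
    rw [hb] at hcb
    rw [hb'] at hcb'
    obtain ⟨g, rfl⟩ := isConj_iff.mp hcb
    obtain ⟨g', rfl⟩ := isConj_iff.mp hcb'
    exact conj_comm2 hexp a g g'
  · intro x _; exact Commute.one_left x
  · intro x _; exact Commute.one_right x
  · intro _ _ _ _ _ _ h1 h2; exact h1.mul_left h2
  · intro _ _ _ _ _ _ h1 h2; exact h1.mul_right h2
  · intro _ _ _ _ h1; exact h1.inv_left
  · intro _ _ _ _ h1; exact h1.inv_right

private lemma mem_nc_self (a : G) : a ∈ Subgroup.normalClosure {a} :=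
  Subgroup.subset_normalClosure (Set.mem_singleton a)

private lemma comm_mem_left {N : Subgroup G} [N.Normal] {p : G} (hp : p ∈ N) (q : G) :
    ⁅p, q⁆ ∈ N := by
  have : ⁅p, q⁆ = p * (q * p⁻¹ * q⁻¹) := by rw [commutatorElement_def]; group
  rw [this]
  exact N.mul_mem hp (‹N.Normal›.conj_mem p⁻¹ (N.inv_mem hp) q)

private lemma comm_mem_right {N : Subgroup G} [N.Normal] (p : G) {q : G} (hq : q ∈ N) :
    ⁅p, q⁆ ∈ N := by
  have : ⁅p, q⁆ = (p * q * p⁻¹) * q⁻¹ := by rw [commutatorElement_def]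
  rw [this]
  exact N.mul_mem (‹N.Normal›.conj_mem q hq p) (N.inv_mem hq)

private lemma not_mem_closure_of_commutes {S : Set G} {t g : G}
    (hS : ∀ s ∈ S, t * s = s * t) (hg : ¬Commute t g) : g ∉ Subgroup.closure S := by
  intro hmem
  have hle : Subgroup.closure S ≤ Subgroup.centralizer {t} := by
    refine (Subgroup.closure_le _).mpr ?_
    intro s hs
    refine Subgroup.mem_centralizer_iff.mpr ?_
    intro h hh
    rw [Set.mem_singleton_iff] at hh; subst hh
    exact hS s hs
  exact hg (Subgroup.mem_centralizer_iff.mp (hle hmem) t (Set.mem_singleton t))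

private lemma chain_step [Finite G] (hG3 : IsPGroup 3 G) {H K : Subgroup G}
    (hle : H ≤ K) (g : G) (hgK : g ∈ K) (hgH : g ∉ H) {m : ℕ}
    (hm : 3 ^ m ≤ Nat.card H) : 3 ^ (m + 1) ≤ Nat.card K := by
  haveI : Fact (Nat.Prime 3) := ⟨by norm_num⟩
  obtain ⟨a, ha⟩ := IsPGroup.iff_card.mp (hG3.to_subgroup H)
  obtain ⟨b, hb⟩ := IsPGroup.iff_card.mp (hG3.to_subgroup K)
  have hlt : Nat.card H < Nat.card K := by
    refine lt_of_le_of_ne (Subgroup.card_le_of_le hle) (fun hcc => hgH ?_)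
    have := Subgroup.eq_of_le_of_card_ge hle (le_of_eq hcc.symm)
    rw [this]; exact hgK
  rw [ha, hb] at hlt
  rw [ha] at hm
  have h1 : a < b := (Nat.pow_lt_pow_iff_right (by norm_num)).mp hlt
  have h2 : m ≤ a := (Nat.pow_le_pow_iff_right (by norm_num)).mp hm
  rw [hb]
  exact Nat.pow_le_pow_right (by norm_num) (by omega)

private lemma central3 [Finite G] (hcard : Nat.card G ≤ 3 ^ 6)
    (hexp : ∀ g : G, g ^ 3 = 1) (x y z : G) : Commute ⁅x, y⁆ z := by
  by_contra hc
  -- notation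
  set β := ⁅x, y⁆ with hβ
  set δ := ⁅x, z⁆ with hδ
  set ε := ⁅y, z⁆ with hε
  set c := ⁅β, z⁆ with hcdef
  have hc1 : c ≠ 1 := fun h => hc (commutatorElement_eq_one_iff_commute.mp h)
  -- non-commuting facts
  have n1 : ¬Commute δ y := fun h => hc (key hexp h)
  have n2 : ¬Commute ε x := by
    intro h
    have h2 : Commute ⁅y, x⁆ z := key hexp h
    have : Commute β z := by
      rw [hβ, ← commutatorElement_inv]
      exact h2.inv_left
    exact hc this
  -- normal closures and memberships
  have CC : ∀ {a u v : G}, u ∈ Subgroup.normalClosure {a} →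
      v ∈ Subgroup.normalClosure {a} → Commute u v := fun {a u v} hu hv => nc_comm hexp a hu hv
  have hβx : β ∈ Subgroup.normalClosure {x} := comm_mem_left (mem_nc_self x) y
  have hβy : β ∈ Subgroup.normalClosure {y} := comm_mem_right x (mem_nc_self y)
  have hδx : δ ∈ Subgroup.normalClosure {x} := comm_mem_left (mem_nc_self x) z
  have hδz : δ ∈ Subgroup.normalClosure {z} := comm_mem_right x (mem_nc_self z)
  have hεy : ε ∈ Subgroup.normalClosure {y} := comm_mem_left (mem_nc_self y) z
  have hεz : ε ∈ Subgroup.normalClosure {z} := comm_mem_right y (mem_nc_self z)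
  have hcx : c ∈ Subgroup.normalClosure {x} := comm_mem_left hβx z
  have hcy : c ∈ Subgroup.normalClosure {y} := comm_mem_left hβy z
  have hcz : c ∈ Subgroup.normalClosure {z} := comm_mem_right β (mem_nc_self z)
  have hxx := mem_nc_self x
  have hyy := mem_nc_self y
  have hzz := mem_nc_self z
  -- the chain of subgroups
  let H1 : Subgroup G := Subgroup.closure {c}
  let H2 : Subgroup G := Subgroup.closure {c, β}
  let H3 : Subgroup G := Subgroup.closure {c, β, δ}
  let H4 : Subgroup G := Subgroup.closure {c, β, δ, ε}
  let H5 : Subgroup G := Subgroup.closure {c, β, δ, ε, x}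
  let H6 : Subgroup G := Subgroup.closure {c, β, δ, ε, x, y}
  let H7 : Subgroup G := Subgroup.closure {c, β, δ, ε, x, y, z}
  have hG3 : IsPGroup 3 G := fun g => ⟨1, by rw [pow_one]; exact hexp g⟩
  -- non-membership facts
  have nm1 : β ∉ H1 := by
    refine not_mem_closure_of_commutes ?_ (fun h => hc h.symm)
    intro s hs
    simp only [Set.mem_singleton_iff] at hs
    subst hs
    exact (CC hzz hcz).eq
  have nm2 : δ ∉ H2 := by
    refine not_mem_closure_of_commutes ?_ (fun h => n1 h.symm)
    intro s hs
    simp only [Set.mem_insert_iff, Set.mem_singleton_iff] at hs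
    rcases hs with rfl | rfl
    · exact (CC hyy hcy).eq
    · exact (CC hyy hβy).eq
  have nm3 : ε ∉ H3 := by
    refine not_mem_closure_of_commutes ?_ (fun h => n2 h.symm)
    intro s hs
    simp only [Set.mem_insert_iff, Set.mem_singleton_iff] at hs
    rcases hs with rfl | rfl | rfl
    · exact (CC hxx hcx).eq
    · exact (CC hxx hβx).eq
    · exact (CC hxx hδx).eq
  have nm4 : x ∉ H4 := by
    refine not_mem_closure_of_commutes ?_ n2
    intro s hs
    simp only [Set.mem_insert_iff, Set.mem_singleton_iff] at hs
    rcases hs with rfl | rfl | rfl | rfl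
    · exact (CC hεy hcy).eq
    · exact (CC hεy hβy).eq
    · exact (CC hεz hδz).eq
    · exact (Commute.refl ε).eq
  have nm5 : y ∉ H5 := by
    refine not_mem_closure_of_commutes ?_ n1
    intro s hs
    simp only [Set.mem_insert_iff, Set.mem_singleton_iff] at hs
    rcases hs with rfl | rfl | rfl | rfl | rfl
    · exact (CC hδx hcx).eq
    · exact (CC hδx hβx).eq
    · exact (Commute.refl δ).eq
    · exact (CC hδz hεz).eq
    · exact (CC hδx hxx).eq
  have nm6 : z ∉ H6 := by
    refine not_mem_closure_of_commutes ?_ hc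
    intro s hs
    simp only [Set.mem_insert_iff, Set.mem_singleton_iff] at hs
    rcases hs with rfl | rfl | rfl | rfl | rfl | rfl
    · exact (CC hβx hcx).eq
    · exact (Commute.refl β).eq
    · exact (CC hβx hδx).eq
    · exact (CC hβy hεy).eq
    · exact (CC hβx hxx).eq
    · exact (CC hβy hyy).eq
  -- membership of the distinguishing elements
  have m1 : c ∈ H1 := Subgroup.subset_closure (by simp)
  have m2 : β ∈ H2 := Subgroup.subset_closure (by simp)
  have m3 : δ ∈ H3 := Subgroup.subset_closure (by simp)
  have m4 : ε ∈ H4 := Subgroup.subset_closure (by simp)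
  have m5 : x ∈ H5 := Subgroup.subset_closure (by simp)
  have m6 : y ∈ H6 := Subgroup.subset_closure (by simp)
  have m7 : z ∈ H7 := Subgroup.subset_closure (by simp)
  -- inclusions
  have le01 : (⊥ : Subgroup G) ≤ H1 := bot_le
  have le12 : H1 ≤ H2 := Subgroup.closure_mono (by intro s hs; simp only [Set.mem_singleton_iff] at hs; simp [hs])
  have le23 : H2 ≤ H3 := Subgroup.closure_mono (by intro s hs; simp only [Set.mem_insert_iff, Set.mem_singleton_iff] at hs; rcases hs with rfl|rfl <;> simp)
  have le34 : H3 ≤ H4 := Subgroup.closure_mono (by intro s hs; simp only [Set.mem_insert_iff, Set.mem_singleton_iff] at hs; rcases hs with rfl|rfl|rfl <;> simp)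
  have le45 : H4 ≤ H5 := Subgroup.closure_mono (by intro s hs; simp only [Set.mem_insert_iff, Set.mem_singleton_iff] at hs; rcases hs with rfl|rfl|rfl|rfl <;> simp)
  have le56 : H5 ≤ H6 := Subgroup.closure_mono (by intro s hs; simp only [Set.mem_insert_iff, Set.mem_singleton_iff] at hs; rcases hs with rfl|rfl|rfl|rfl|rfl <;> simp)
  have le67 : H6 ≤ H7 := Subgroup.closure_mono (by intro s hs; simp only [Set.mem_insert_iff, Set.mem_singleton_iff] at hs; rcases hs with rfl|rfl|rfl|rfl|rfl|rfl <;> simp)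
  -- cardinality chain
  have h0 : (3 : ℕ) ^ 0 ≤ Nat.card (⊥ : Subgroup G) := by
    rw [Subgroup.card_bot]; norm_num
  have nm0 : c ∉ (⊥ : Subgroup G) := by simpa [Subgroup.mem_bot] using hc1
  have k1 := chain_step hG3 le01 c m1 nm0 h0
  have k2 := chain_step hG3 le12 β m2 nm1 k1
  have k3 := chain_step hG3 le23 δ m3 nm2 k2
  have k4 := chain_step hG3 le34 ε m4 nm3 k3
  have k5 := chain_step hG3 le45 x m5 nm4 k4
  have k6 := chain_step hG3 le56 y m6 nm5 k5
  have k7 := chain_step hG3 le67 z m7 nm6 k6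
  -- contradiction with the cardinality bound
  have hle : Nat.card H7 ≤ Nat.card G :=
    Nat.le_of_dvd Nat.card_pos (Subgroup.card_subgroup_dvd_card H7)
  have : (3 : ℕ) ^ 7 ≤ 3 ^ 6 := by
    calc (3 : ℕ) ^ 7 = 3 ^ (0 + 1 + 1 + 1 + 1 + 1 + 1 + 1) := by norm_num
      _ ≤ Nat.card H7 := k7
      _ ≤ Nat.card G := hle
      _ ≤ 3 ^ 6 := hcard
  norm_num at this

end ExpThree

/-- Let `G` be a finite group with `Nat.card G ≤ 3 ^ 6` such that `g ^ 3 = 1` for every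
`g ∈ G`. Then `⁅G,G⁆` is contained in the center of `G`; in particular `G` is nilpotent of
class at most 2. -/
theorem exponent_three_small_order_class_two
    (G : Type*) [Group G] [Finite G]
    (hcard : Nat.card G ≤ 3 ^ 6) (hexp : ∀ g : G, g ^ 3 = 1) :
    commutator G ≤ Subgroup.center G ∧
      ∃ h : Group.IsNilpotent G, Group.nilpotencyClass G ≤ 2 := by
  have hcent : commutator G ≤ Subgroup.center G := by
    rw [commutator_def]
    refine Subgroup.commutator_le.mpr ?_
    intro g1 _ g2 _
    refine Subgroup.mem_center_iff.mpr ?_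
    intro g
    exact (central3 hcard hexp g1 g2 g).symm.eq
  refine ⟨hcent, ?_⟩
  have hbot : Subgroup.lowerCentralSeries (⊤ : Subgroup G) 2 = ⊥ := by
    rw [eq_bot_iff, lowerCentralSeries_succ]
    refine Subgroup.commutator_le.mpr ?_
    intro g1 hg1 g2 _
    have hg1' : g1 ∈ Subgroup.center G := by
      apply hcent
      rw [← lowerCentralSeries_one (G := G)]
      exact hg1
    rw [Subgroup.mem_bot, commutatorElement_eq_one_iff_commute]
    exact ((Subgroup.mem_center_iff.mp hg1' g2).symm : g1 * g2 = g2 * g1)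
  haveI hnil : Group.IsNilpotent G := nilpotent_iff_lowerCentralSeries.mpr ⟨2, hbot⟩
  exact ⟨hnil, lowerCentralSeries_eq_bot_iff_nilpotencyClass_le.mp hbot⟩
end
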